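/- arXiv:2201.07439 — 11 statements merged into one kernel-verified Lean document; each statement's English description precedes it below -/
import Mathlib

section
/- If two permutations w and π in S_n differ by a single Knuth relation (of the first or second kind), then for every i, the value i appears before i+1 in the one-line notation of w if and only if i appears before i+1 in the one-line notation of π. -/
/-- One-line notation for an element of `S_n`: a list that is a permutation of `1, …, n`. -/
def IsOneLine (n : ℕ) (w : List ℕ) : Prop :=
  w.Perm ((List.range n).map (· + 1))

/-- `w` and `π` differ by a single elementary Knuth relation (first or second kind,
in either direction). -/
def KnuthStep (w π : List ℕ) : Prop :=
  ∃ u v : List ℕ, ∃ x y z : ℕ, x < y ∧ y < z ∧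
    ((w = u ++ y :: x :: z :: v ∧ π = u ++ y :: z :: x :: v) ∨
     (w = u ++ y :: z :: x :: v ∧ π = u ++ y :: x :: z :: v) ∨
     (w = u ++ x :: z :: y :: v ∧ π = u ++ z :: x :: y :: v) ∨
     (w = u ++ z :: x :: y :: v ∧ π = u ++ x :: z :: y :: v))

/-- Knuth equivalence: the reflexive-transitive closure of elementary Knuth relations. -/
def KnuthEquiv : List ℕ → List ℕ → Prop :=
  Relation.ReflTransGen KnuthStep

/-- `w` contains the pattern `3412`: a subsequence `(a, b, c, d)` with `c < d < a < b`. -/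
def Contains3412 (w : List ℕ) : Prop :=
  ∃ a b c d : ℕ, c < d ∧ d < a ∧ a < b ∧ [a, b, c, d].Sublist w

/-- `w` contains the pattern `4231`: a subsequence `(a, b, c, d)` with `d < b < c < a`. -/
def Contains4231 (w : List ℕ) : Prop :=
  ∃ a b c d : ℕ, d < b ∧ b < c ∧ c < a ∧ [a, b, c, d].Sublist w

/-- The decreasing run `hi, hi - 1, …, lo`. -/
def descFromTo (hi lo : ℕ) : List ℕ :=
  (List.range (hi + 1 - lo)).map (fun i => hi - i)

/-- The increasing run `lo, lo + 1, …, hi`. -/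
def ascFromTo (lo hi : ℕ) : List ℕ :=
  (List.range (hi + 1 - lo)).map (fun i => lo + i)

/-- The length of a longest strictly increasing subsequence of `w`. -/
def lisLen (w : List ℕ) : ℕ :=
  ((w.sublists.filter (fun l => decide (l.IsChain (· < ·)))).map List.length).foldr max 0

/-- The length of a longest strictly decreasing subsequence of `w`. -/
def ldsLen (w : List ℕ) : ℕ :=
  ((w.sublists.filter (fun l => decide (l.IsChain (· > ·)))).map List.length).foldr max 0

/-- The one-line word of the longest element of the Young subgroup attached to a
composition: each consecutive block is reversed.  `s` is the offset already consumed. -/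
def blockRevWord : List ℕ → ℕ → List ℕ
  | [], _ => []
  | m :: rest, s => descFromTo (s + m) (s + 1) ++ blockRevWord rest (s + m)

theorem stmt0 (n : ℕ) (w π : List ℕ) (hw : IsOneLine n w)
    (hstep : KnuthStep w π) (i : ℕ) :
    [i, i + 1].Sublist w ↔ [i, i + 1].Sublist π := by
  obtain ⟨u, v, x, y, z, hxy, hyz, hcase⟩ := hstep
  set P : ℕ → Bool := fun a => a = i || a = i + 1 with hP
  have hfree : P x = false ∨ P z = false := by
    by_contra h
    push_neg at h
    simp only [hP, ne_eq, Bool.not_eq_false, decide_eq_true_eq, Bool.or_eq_true] at h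
    omega
  have key : ∀ l : List ℕ, [i, i + 1].Sublist l ↔ [i, i + 1].Sublist (l.filter P) := by
    intro l
    constructor
    · intro h
      have := h.filter P
      simpa [hP] using this
    · intro h
      exact h.trans List.filter_sublist
  have fsw : ∀ (l r : List ℕ), (l ++ x :: z :: r).filter P = (l ++ z :: x :: r).filter P := by
    intro l r
    simp only [List.filter_append, List.filter_cons]
    rcases hfree with h | h <;> simp [h]
  have he1 : List.filter P (u ++ y :: x :: z :: v) = List.filter P (u ++ y :: z :: x :: v) := by
    have := fsw (u ++ [y]) v; simpa using this
  have he2 : List.filter P (u ++ x :: z :: y :: v) = List.filter P (u ++ z :: x :: y :: v) :=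
    fsw u (y :: v)
  have iff1 : [i, i + 1].Sublist (u ++ y :: x :: z :: v) ↔
      [i, i + 1].Sublist (u ++ y :: z :: x :: v) := by
    rw [key (u ++ y :: x :: z :: v), key (u ++ y :: z :: x :: v), he1]
  have iff2 : [i, i + 1].Sublist (u ++ x :: z :: y :: v) ↔
      [i, i + 1].Sublist (u ++ z :: x :: y :: v) := by
    rw [key (u ++ x :: z :: y :: v), key (u ++ z :: x :: y :: v), he2]
  rcases hcase with ⟨hw', hπ'⟩ | ⟨hw', hπ'⟩ | ⟨hw', hπ'⟩ | ⟨hw', hπ'⟩ <;> subst hw' hπ'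
  · exact iff1
  · exact iff1.symm
  · exact iff2
  · exact iff2.symm
end

section
/- For every i, the relative order of the values i and i+1 in one-line notation is invariant under Knuth equivalence: if w and π are Knuth equivalent permutations in S_n, then i occurs before i+1 in w if and only if i occurs before i+1 in π. -/
lemma swap_key (a b i j : ℕ) (hna : ¬(a = i ∧ b = j)) :
    ∀ (u v : List ℕ), [i, j].Sublist (u ++ a :: b :: v) → [i, j].Sublist (u ++ b :: a :: v) := by
  intro u
  induction u with
  | nil =>
    intro v h
    simp only [List.nil_append] at h ⊢
    cases h with
    | cons _ h' =>
      cases h' with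
      | cons _ h2 => exact (h2.cons _).cons _
      | cons_cons _ h2 => exact List.Sublist.cons_cons _ (h2.cons _)
    | cons_cons _ h' =>
      cases h' with
      | cons _ h2 => exact List.Sublist.cons _ (List.Sublist.cons_cons _ h2)
      | cons_cons _ h2 => exact absurd ⟨rfl, rfl⟩ hna
  | cons c u ih =>
    intro v h
    simp only [List.cons_append] at h ⊢
    cases h with
    | cons _ h' => exact (ih v h').cons _
    | cons_cons _ h' =>
      refine List.Sublist.cons_cons _ ?_
      rw [List.singleton_sublist] at h' ⊢
      simp only [List.mem_append, List.mem_cons] at h' ⊢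
      tauto

lemma swap_iff (a b i : ℕ) (hab : a + 1 < b ∨ b + 1 < a) (u v : List ℕ) :
    [i, i + 1].Sublist (u ++ a :: b :: v) ↔ [i, i + 1].Sublist (u ++ b :: a :: v) := by
  constructor
  · exact swap_key a b i (i+1) (by rintro ⟨rfl, rfl⟩; omega) u v
  · exact swap_key b a i (i+1) (by rintro ⟨rfl, rfl⟩; omega) u v

lemma knuthStep_iff (i : ℕ) {w π : List ℕ} (h : KnuthStep w π) :
    [i, i + 1].Sublist w ↔ [i, i + 1].Sublist π := by
  obtain ⟨u, v, x, y, z, hxy, hyz, hc⟩ := h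
  rcases hc with ⟨rfl, rfl⟩ | ⟨rfl, rfl⟩ | ⟨rfl, rfl⟩ | ⟨rfl, rfl⟩
  · simpa using swap_iff x z i (Or.inl (by omega)) (u ++ [y]) v
  · simpa using (swap_iff x z i (Or.inl (by omega)) (u ++ [y]) v).symm
  · simpa using swap_iff x z i (Or.inl (by omega)) u (y :: v)
  · simpa using (swap_iff x z i (Or.inl (by omega)) u (y :: v)).symm


theorem stmt1 (n : ℕ) (w π : List ℕ) (hw : IsOneLine n w)
    (h : KnuthEquiv w π) (i : ℕ) :
    [i, i + 1].Sublist w ↔ [i, i + 1].Sublist π := by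
  induction h with
  | refl => exact Iff.rfl
  | tail _ hstep ih => exact ih.trans (knuthStep_iff i hstep)
end

section
/- Every permutation in S_n that is Knuth equivalent to the permutation (n, n-1, ..., 3, 1, 2) avoids both the pattern 3412 and the pattern 4231. -/
section Helpers

lemma mem_descFromTo {hi lo m : ℕ} (h : m ∈ descFromTo hi lo) : lo ≤ m ∧ m ≤ hi := by
  simp only [descFromTo, List.mem_map, List.mem_range] at h
  obtain ⟨i, hi', rfl⟩ := h
  omega

lemma pairwise_descFromTo (hi lo : ℕ) : (descFromTo hi lo).Pairwise (fun p q => q < p) := by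
  rw [descFromTo, List.pairwise_map]
  refine List.Pairwise.imp_of_mem ?_ List.pairwise_lt_range
  intro i j hi' hj' hij
  simp only [List.mem_range] at hi' hj'
  omega

lemma descFromTo_cons {hi lo : ℕ} (h : lo ≤ hi + 1) :
    descFromTo (hi + 1) lo = (hi + 1) :: descFromTo hi lo := by
  rw [descFromTo, descFromTo]
  have : hi + 1 + 1 - lo = (hi + 1 - lo) + 1 := by omega
  rw [this, List.range_succ_eq_map]
  simp only [List.map_cons, List.map_map, Nat.sub_zero]
  congr 1
  apply List.map_congr_left
  intro i _
  simp only [Function.comp_apply]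
  omega

lemma descFromTo_snoc {hi lo : ℕ} (h : lo ≤ hi) :
    descFromTo hi lo = descFromTo hi (lo + 1) ++ [lo] := by
  rw [descFromTo, descFromTo]
  have : hi + 1 - lo = (hi + 1 - (lo + 1)) + 1 := by omega
  rw [this, List.range_succ, List.map_append]
  congr 2
  simp only [List.map_cons, List.map_nil]
  congr 1
  omega

end Helpers
lemma split_at_one : ∀ (u : List ℕ) (α : List ℕ) {v β : List ℕ},
    u ++ 1 :: v = α ++ 1 :: β → 1 ∉ u → 1 ∉ α → u = α ∧ v = β := by
  intro u
  induction u with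
  | nil =>
    intro α v β h hu hα
    cases α with
    | nil => simpa using h
    | cons a α' =>
      simp only [List.nil_append, List.cons_append, List.cons.injEq] at h
      exact absurd (h.1 ▸ (List.mem_cons_self (a := a) (l := α'))) hα
  | cons a u' ih =>
    intro α v β h hu hα
    cases α with
    | nil =>
      simp only [List.cons_append, List.nil_append, List.cons.injEq] at h
      exact absurd (h.1 ▸ (List.mem_cons_self (a := a) (l := u'))) hu
    | cons b α' =>
      simp only [List.cons_append, List.cons.injEq] at h
      obtain ⟨rfl, h2⟩ := h
      have := ih α' h2 (fun hm => hu (List.mem_cons_of_mem _ hm))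
        (fun hm => hα (List.mem_cons_of_mem _ hm))
      exact ⟨by rw [this.1], this.2⟩

/-- The key chain property: consecutive ascents only happen at a `1`. -/
lemma chain_of_split {D E : List ℕ} (hD : ∀ m ∈ D, 2 ≤ m) (hE : ∀ m ∈ E, 2 ≤ m)
    (hDp : D.Pairwise (fun p q => q < p)) (hEp : E.Pairwise (fun p q => q < p)) :
    (D ++ 1 :: E).IsChain (fun p q => q < p ∨ p = 1) := by
  rw [List.isChain_append]
  refine ⟨(hDp.isChain).imp (fun _ _ h => Or.inl h), ?_, ?_⟩
  · rw [List.isChain_cons]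
    exact ⟨fun y _ => Or.inr rfl, (hEp.isChain).imp (fun _ _ h => Or.inl h)⟩
  · intro x hx y hy
    have := hD x (List.mem_of_mem_getLast? hx)
    simp only [List.head?_cons, Option.mem_def, Option.some.injEq] at hy
    omega

/-- If `w = D ++ 1 :: E` with strictly‑decreasing blocks and a consecutive ascent
occurs at `s < t`, then the ascent is exactly at the `1`. -/
lemma ascent_split {D E P v : List ℕ} {s t : ℕ} (hD : ∀ m ∈ D, 2 ≤ m) (hE : ∀ m ∈ E, 2 ≤ m)
    (hDp : D.Pairwise (fun p q => q < p)) (hEp : E.Pairwise (fun p q => q < p))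
    (heq : D ++ 1 :: E = P ++ s :: t :: v) (hst : s < t) :
    P = D ∧ s = 1 ∧ t :: v = E := by
  have hch := chain_of_split hD hE hDp hEp
  rw [heq] at hch
  have hsuf : (s :: t :: v).IsChain (fun p q => q < p ∨ p = 1) :=
    ((List.isChain_append.mp hch).2).1
  have hrel : t < s ∨ s = 1 := (List.isChain_cons_cons.mp hsuf).1
  have hs1 : s = 1 := by omega
  subst hs1
  have h1P : 1 ∉ P := by
    intro hmem
    have hc := congrArg (List.count 1) heq
    rw [List.count_append, List.count_append] at hc
    have hcD : List.count 1 D = 0 := by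
      rw [List.count_eq_zero]
      intro h; have := hD 1 h; omega
    have hcE : List.count 1 E = 0 := by
      rw [List.count_eq_zero]
      intro h; have := hE 1 h; omega
    have hcP : 1 ≤ List.count 1 P := List.one_le_count_iff.mpr hmem
    simp [List.count_cons, hcD, hcE] at hc
    omega
  have h1D : 1 ∉ D := fun h => by have := hD 1 h; omega
  obtain ⟨h1, h2⟩ := split_at_one D P heq h1D h1P
  exact ⟨h1.symm, rfl, h2.symm⟩
/-- The Knuth class of `(n, …, 3, 1, 2)`: `1` inserted anywhere but last in `(n, …, 2)`. -/
def ClassS (n : ℕ) (w : List ℕ) : Prop :=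
  ∃ a : ℕ, 2 ≤ a ∧ a ≤ n ∧ w = descFromTo n (a + 1) ++ 1 :: descFromTo a 2

lemma classS_step {n : ℕ} {w π : List ℕ} (hw : ClassS n w) (h : KnuthStep w π) :
    ClassS n π := by
  obtain ⟨a, ha2, han, rfl⟩ := hw
  obtain ⟨u, v, x, y, z, hxy, hyz, hcase⟩ := h
  set D := descFromTo n (a + 1) with hDdef
  set E := descFromTo a 2 with hEdef
  have hD : ∀ m ∈ D, 2 ≤ m := fun m hm => by have := mem_descFromTo hm; omega
  have hE : ∀ m ∈ E, 2 ≤ m := fun m hm => by have := mem_descFromTo hm; omega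
  have hDp : D.Pairwise (fun p q => q < p) := pairwise_descFromTo _ _
  have hEp : E.Pairwise (fun p q => q < p) := pairwise_descFromTo _ _
  have hEcons : E = a :: descFromTo (a - 1) 2 := by
    rw [hEdef]
    obtain ⟨b, rfl⟩ : ∃ b, a = b + 1 := ⟨a - 1, by omega⟩
    rw [descFromTo_cons (by omega)]
    simp
  rcases hcase with ⟨hw, hπ⟩ | ⟨hw, hπ⟩ | ⟨hw, hπ⟩ | ⟨hw, hπ⟩
  · -- w = u ++ y :: x :: z :: v ; ascent (x, z) with prefix u ++ [y]
    exfalso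
    have heq : D ++ 1 :: E = (u ++ [y]) ++ x :: z :: v := by
      rw [List.append_assoc]; exact hw
    obtain ⟨hP, hx1, hE'⟩ := ascent_split hD hE hDp hEp heq (by omega)
    -- z = a, y = last of D = a + 1, contradiction with y < z
    have hz : z = a := by rw [hEcons] at hE'; exact (List.cons.injEq .. ▸ hE').1
    have hDne : D ≠ [] := by
      intro h0; rw [h0] at hP; exact absurd hP (by simp)
    have haln : a < n := by
      by_contra hc
      have : a = n := by omega
      rw [hDdef, this] at hDne
      apply hDne
      simp [descFromTo]
    have hDsnoc : D = descFromTo n (a + 2) ++ [a + 1] := by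
      rw [hDdef]; exact descFromTo_snoc (by omega)
    rw [hDsnoc] at hP
    have := List.append_inj' hP rfl
    have hy : y = a + 1 := by
      have h2 := this.2
      simpa using h2
    omega
  · -- w = u ++ y :: z :: x :: v ; ascent (y, z) with prefix u
    exfalso
    have heq : D ++ 1 :: E = u ++ y :: z :: (x :: v) := by rw [← hw]
    obtain ⟨hP, hy1, hE'⟩ := ascent_split hD hE hDp hEp heq (by omega)
    -- x < y = 1, but x ∈ E so 2 ≤ x
    have hxE : x ∈ E := by rw [← hE']; simp
    have := hE x hxE
    omega
  · -- w = u ++ x :: z :: y :: v ; ascent (x, z) with prefix u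
    have heq : D ++ 1 :: E = u ++ x :: z :: (y :: v) := by rw [← hw]
    obtain ⟨hP, hx1, hE'⟩ := ascent_split hD hE hDp hEp heq (by omega)
    rw [hEcons] at hE'
    have hz : z = a := (List.cons.injEq .. ▸ hE').1
    have hyv : y :: v = descFromTo (a - 1) 2 := (List.cons.injEq .. ▸ hE').2
    have ha3 : 3 ≤ a := by
      by_contra hc
      have : a = 2 := by omega
      rw [this] at hyv
      simp [descFromTo] at hyv
    have hE2 : descFromTo (a - 1) 2 = (a - 1) :: descFromTo (a - 2) 2 := by
      have h1 : a - 1 = (a - 2) + 1 := by omega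
      rw [h1, descFromTo_cons (by omega)]
    rw [hE2] at hyv
    have hy : y = a - 1 := (List.cons.injEq .. ▸ hyv).1
    have hv : v = descFromTo (a - 2) 2 := (List.cons.injEq .. ▸ hyv).2
    refine ⟨a - 1, by omega, by omega, ?_⟩
    rw [hπ, hP, hx1, hz, hy, hv]
    have h1 : descFromTo n ((a - 1) + 1) = descFromTo n (a + 1) ++ [a] := by
      have e1 : (a - 1) + 1 = a := by omega
      rw [e1, descFromTo_snoc (le_trans (by omega) han)]
    have h2 : descFromTo (a - 1) 2 = (a - 1) :: descFromTo (a - 2) 2 := hE2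
    rw [h1, h2, hDdef]
    simp
  · -- w = u ++ z :: x :: y :: v ; ascent (x, y) with prefix u ++ [z]
    have heq : D ++ 1 :: E = (u ++ [z]) ++ x :: y :: v := by
      rw [List.append_assoc]; exact hw
    obtain ⟨hP, hx1, hE'⟩ := ascent_split hD hE hDp hEp heq (by omega)
    rw [hEcons] at hE'
    have hy : y = a := (List.cons.injEq .. ▸ hE').1
    have hv : v = descFromTo (a - 1) 2 := (List.cons.injEq .. ▸ hE').2
    have hDne : D ≠ [] := by
      intro h0; rw [h0] at hP; exact absurd hP (by simp)
    have haln : a < n := by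
      by_contra hc
      have : a = n := by omega
      rw [hDdef, this] at hDne
      apply hDne
      simp [descFromTo]
    have hDsnoc : D = descFromTo n (a + 2) ++ [a + 1] := by
      rw [hDdef]; exact descFromTo_snoc (by omega)
    rw [hDsnoc] at hP
    have hinj := List.append_inj' hP rfl
    have hu : u = descFromTo n (a + 2) := hinj.1
    have hz : z = a + 1 := by have := hinj.2; simpa using this
    refine ⟨a + 1, by omega, by omega, ?_⟩
    rw [hπ, hu, hx1, hz, hy, hv]
    have h2 : descFromTo (a + 1) 2 = (a + 1) :: a :: descFromTo (a - 1) 2 := by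
      rw [descFromTo_cons (by omega)]
      congr 1
    rw [h2]
lemma classS_pairwise {n : ℕ} {w : List ℕ} (hw : ClassS n w) :
    w.Pairwise (fun p q => p < q → p = 1) ∧ ∀ m ∈ w, 1 ≤ m := by
  obtain ⟨a, ha2, han, rfl⟩ := hw
  constructor
  · rw [List.pairwise_append]
    refine ⟨(pairwise_descFromTo _ _).imp (fun h hlt => absurd hlt (by omega)), ?_, ?_⟩
    · rw [List.pairwise_cons]
      exact ⟨fun y _ _ => rfl,
        (pairwise_descFromTo _ _).imp (fun h hlt => absurd hlt (by omega))⟩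
    · intro p hp q hq
      have h1 := mem_descFromTo hp
      rcases List.mem_cons.mp hq with rfl | hq'
      · omega
      · have h2 := mem_descFromTo hq'
        intro h; omega
  · intro m hm
    rcases List.mem_append.mp hm with h | h
    · have := mem_descFromTo h; omega
    · rcases List.mem_cons.mp h with rfl | h'
      · omega
      · have := mem_descFromTo h'; omega

lemma classS_avoid {n : ℕ} {w : List ℕ} (hw : ClassS n w) :
    ¬ Contains3412 w ∧ ¬ Contains4231 w := by
  obtain ⟨hpw, hpos⟩ := classS_pairwise hw
  constructor
  · rintro ⟨a, b, c, d, hcd, hda, hab, hsub⟩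
    have hp : ([a, b, c, d] : List ℕ).Pairwise (fun p q => p < q → p = 1) :=
      hpw.sublist hsub
    have hab1 : a = 1 := by
      have := (List.pairwise_cons.mp hp).1 b (by simp)
      exact this hab
    have hd : 1 ≤ d := hpos d (hsub.mem (by simp))
    omega
  · rintro ⟨a, b, c, d, hdb, hbc, hca, hsub⟩
    have hp : ([a, b, c, d] : List ℕ).Pairwise (fun p q => p < q → p = 1) :=
      hpw.sublist hsub
    have hb1 : b = 1 := by
      have hp2 := (List.pairwise_cons.mp hp).2
      have := (List.pairwise_cons.mp hp2).1 c (by simp)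
      exact this hbc
    have hd : 1 ≤ d := hpos d (hsub.mem (by simp))
    omega

theorem stmt2 (n : ℕ) (hn : 3 ≤ n) (w : List ℕ)
    (hw : KnuthEquiv (descFromTo n 3 ++ [1, 2]) w) :
    ¬ Contains3412 w ∧ ¬ Contains4231 w := by
  have hbase : ClassS n (descFromTo n 3 ++ [1, 2]) := by
    refine ⟨2, le_refl 2, by omega, ?_⟩
    have h22 : descFromTo 2 2 = [2] := by
      simp [descFromTo, List.range_succ]
    rw [h22]
  have hcl : ClassS n w := by
    induction hw with
    | refl => exact hbase
    | tail _ hstep ih => exact classS_step ih hstep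
  exact classS_avoid hcl
end

section
/- Every permutation in S_n that is Knuth equivalent to the permutation (n-1, n-2, ..., 2, 1, n) avoids both the pattern 3412 and the pattern 4231. -/
section Stmt3Aux

private lemma mem_desc_lt' {n x : ℕ} (hx : x ∈ descFromTo (n - 1) 1) : x < n := by
  simp [descFromTo] at hx; obtain ⟨i, hi, rfl⟩ := hx; omega

/-- Invariant preserved by Knuth moves: the word is a permutation of `n, n-1, …, 1`
and every ascent has the value `n` as its top. -/
private def DescInv (n : ℕ) (w : List ℕ) : Prop :=
  w.Perm (n :: descFromTo (n - 1) 1) ∧ w.Pairwise (fun a b => a < b → b = n)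

private lemma descInv_base (n : ℕ) : DescInv n (descFromTo (n - 1) 1 ++ [n]) := by
  constructor
  · simpa using List.perm_append_comm (l₁ := descFromTo (n - 1) 1) (l₂ := [n])
  · rw [List.pairwise_append]
    refine ⟨?_, by simp, ?_⟩
    · rw [List.pairwise_iff_getElem]
      intro i j hi hj hij
      simp only [descFromTo, List.getElem_map, List.getElem_range]
      simp only [descFromTo, List.length_map, List.length_range] at hi hj
      intro h; omega
    · intro a _ b hb
      simp at hb
      subst hb
      intro _; rfl

private lemma pairwise_swap_middle {P : ℕ → ℕ → Prop} {u v : List ℕ} {b c : ℕ}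
    (h : (u ++ b :: c :: v).Pairwise P) (hcb : P c b) :
    (u ++ c :: b :: v).Pairwise P := by
  rw [List.pairwise_append] at h ⊢
  obtain ⟨h1, h2, h3⟩ := h
  rw [List.pairwise_cons] at h2
  obtain ⟨hb, h2⟩ := h2
  rw [List.pairwise_cons] at h2
  obtain ⟨hc, h2⟩ := h2
  refine ⟨h1, ?_, ?_⟩
  · rw [List.pairwise_cons]
    refine ⟨?_, ?_⟩
    · intro x hx
      rcases List.mem_cons.mp hx with rfl | hx
      · exact hcb
      · exact hc x hx
    · rw [List.pairwise_cons]
      exact ⟨fun x hx => hb x (List.mem_cons_of_mem _ hx), h2⟩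
  · intro a ha x hx
    apply h3 a ha
    simp only [List.mem_cons] at hx ⊢
    tauto

private lemma descInv_step {n : ℕ} {w π : List ℕ} (hs : KnuthStep w π) (hI : DescInv n w) :
    DescInv n π := by
  obtain ⟨u, v, x, y, z, hxy, hyz, hcase⟩ := hs
  obtain ⟨hperm, hpw⟩ := hI
  rcases hcase with ⟨hw, hp⟩ | ⟨hw, hp⟩ | ⟨hw, hp⟩ | ⟨hw, hp⟩
  · subst hw hp
    refine ⟨.trans ?_ hperm, ?_⟩
    · exact List.Perm.append_left u (.cons y (List.Perm.swap x z v))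
    · have h' : ((u ++ [y]) ++ x :: z :: v).Pairwise (fun a b => a < b → b = n) := by
        simpa using hpw
      have := pairwise_swap_middle h' (fun h => absurd h (by omega))
      simpa using this
  · subst hw hp
    have h2 := (List.pairwise_append.mp hpw).2.1
    have hzn : z = n := (List.rel_of_pairwise_cons h2 (by simp)) hyz
    refine ⟨.trans ?_ hperm, ?_⟩
    · exact List.Perm.append_left u (.cons y (List.Perm.swap z x v))
    · have h' : ((u ++ [y]) ++ z :: x :: v).Pairwise (fun a b => a < b → b = n) := by
        simpa using hpw
      have := pairwise_swap_middle h' (fun _ => hzn)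
      simpa using this
  · exfalso
    subst hw
    have h2 := (List.pairwise_append.mp hpw).2.1
    have hyn : y = n := (List.rel_of_pairwise_cons h2 (by simp)) hxy
    have hz : z ∈ n :: descFromTo (n - 1) 1 := hperm.subset (by simp)
    rcases List.mem_cons.mp hz with rfl | hz
    · omega
    · have := mem_desc_lt' hz; omega
  · exfalso
    subst hw
    have h2 := (List.pairwise_append.mp hpw).2.1
    have h3 := List.pairwise_cons.mp h2 |>.2
    have hyn : y = n := (List.rel_of_pairwise_cons h3 (by simp)) hxy
    have hz : z ∈ n :: descFromTo (n - 1) 1 := hperm.subset (by simp)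
    rcases List.mem_cons.mp hz with rfl | hz
    · omega
    · have := mem_desc_lt' hz; omega

private lemma descInv_avoid {n : ℕ} {w : List ℕ} (hI : DescInv n w) :
    ¬ Contains3412 w ∧ ¬ Contains4231 w := by
  obtain ⟨hperm, hpw⟩ := hI
  constructor
  · rintro ⟨a, b, c, d, hcd, hda, hab, hsub⟩
    have hp := List.Pairwise.sublist hsub hpw
    simp only [List.pairwise_cons, List.mem_cons] at hp
    have hb : b = n := by
      have := hp.1 b; simp at this; exact this hab
    have hd : d = n := by
      have := hp.2.2.1 d; simp at this; exact this hcd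
    omega
  · rintro ⟨a, b, c, d, hdb, hbc, hca, hsub⟩
    have hp := List.Pairwise.sublist hsub hpw
    simp only [List.pairwise_cons, List.mem_cons] at hp
    have hc : c = n := by
      have := hp.2.1 c; simp at this; exact this hbc
    have ha : a ∈ n :: descFromTo (n - 1) 1 := hperm.subset (hsub.subset (by simp))
    rcases List.mem_cons.mp ha with rfl | ha
    · omega
    · have := mem_desc_lt' ha; omega

end Stmt3Aux

theorem stmt3 (n : ℕ) (hn : 2 ≤ n) (w : List ℕ)
    (hw : KnuthEquiv (descFromTo (n - 1) 1 ++ [n]) w) :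
    ¬ Contains3412 w ∧ ¬ Contains4231 w := by
  have hI : DescInv n w := by
    induction hw with
    | refl => exact descInv_base n
    | tail _ hstep ih => exact descInv_step hstep ih
  exact descInv_avoid hI
end

section
/- For n ≥ 4 and 2 < k < n, the permutation (n, n-1, ..., k+1, k-1, k-2, ..., 2, 1, k) in S_n is Knuth equivalent to a permutation containing the pattern 4231. -/
lemma desc_split21 (m : ℕ) : descFromTo (m+2) 1 = descFromTo (m+2) 3 ++ [2,1] := by
  simp [descFromTo, List.range_succ]

lemma desc_head (n k : ℕ) (h : k < n) : ∃ t, descFromTo n (k+1) = n :: t := by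
  have : n + 1 - (k+1) = (n - k - 1) + 1 := by omega
  rw [descFromTo, this, List.range_succ_eq_map]
  simp

theorem stmt4 (n k : ℕ) (hn : 4 ≤ n) (hk : 2 < k) (hkn : k < n) :
    ∃ π : List ℕ,
      KnuthEquiv (descFromTo n (k + 1) ++ descFromTo (k - 1) 1 ++ [k]) π ∧
      Contains4231 π := by
  obtain ⟨t, ht⟩ := desc_head n k hkn
  have hsplit : descFromTo (k-1) 1 = descFromTo (k-1) 3 ++ [2,1] := by
    have : k - 1 = (k - 3) + 2 := by omega
    rw [this, desc_split21]
  refine ⟨descFromTo n (k+1) ++ descFromTo (k-1) 3 ++ [2, k, 1], ?_, ?_⟩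
  · apply Relation.ReflTransGen.single
    refine ⟨descFromTo n (k+1) ++ descFromTo (k-1) 3, [], 1, 2, k,
      one_lt_two, hk, Or.inl ⟨?_, ?_⟩⟩
    · rw [hsplit]; simp
    · simp
  · refine ⟨n, 2, k, 1, one_lt_two, hk, hkn, ?_⟩
    rw [ht]
    have : (n :: t) ++ descFromTo (k-1) 3 ++ [2, k, 1]
        = n :: (t ++ descFromTo (k-1) 3 ++ [2, k, 1]) := by simp
    rw [this]
    exact (List.sublist_append_right _ _).cons₂ n
end

section
/- For any 2 ≤ k ≤ n, every permutation in S_n that is Knuth equivalent to the permutation (k, 1, 2, ..., k-1, k+1, ..., n) avoids both the pattern 3412 and the pattern 4231. -/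
def chainSupLen (R : ℕ → ℕ → Prop) [DecidableRel R] (w : List ℕ) : ℕ :=
  ((w.sublists.filter (fun l => decide (l.IsChain R))).map List.length).foldr max 0

lemma lisLen_eq (w : List ℕ) : lisLen w = chainSupLen (· < ·) w := rfl
lemma ldsLen_eq (w : List ℕ) : ldsLen w = chainSupLen (· > ·) w := rfl

lemma le_foldr_max {L : List ℕ} {x : ℕ} (h : x ∈ L) : x ≤ L.foldr max 0 := by
  induction L with
  | nil => simp at h
  | cons a L ih =>
    rcases List.mem_cons.mp h with h | h
    · subst h; exact le_max_left _ _
    · exact (ih h).trans (le_max_right _ _)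

lemma foldr_max_mem {L : List ℕ} (h : L ≠ []) : L.foldr max 0 ∈ L := by
  induction L with
  | nil => simp at h
  | cons a L ih =>
    rcases eq_or_ne L [] with rfl | hL
    · simp
    · rcases le_total a (L.foldr max 0) with h' | h'
      · simp only [List.foldr, max_eq_right h']
        exact List.mem_cons_of_mem _ (ih hL)
      · simp [List.foldr, max_eq_left h']

lemma chainSupLen_ge {R : ℕ → ℕ → Prop} [DecidableRel R] {w l : List ℕ}
    (hl : l.Sublist w) (hc : l.IsChain R) : l.length ≤ chainSupLen R w := by
  apply le_foldr_max
  exact List.mem_map_of_mem (List.mem_filter.mpr ⟨List.mem_sublists.mpr hl, by simpa using hc⟩)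

lemma chainSupLen_spec (R : ℕ → ℕ → Prop) [DecidableRel R] (w : List ℕ) :
    ∃ l : List ℕ, l.Sublist w ∧ l.IsChain R ∧ l.length = chainSupLen R w := by
  have hne : (w.sublists.filter (fun l => decide (l.IsChain R))).map List.length ≠ [] := by
    simp only [ne_eq, List.map_eq_nil_iff, List.filter_eq_nil_iff]
    push_neg
    exact ⟨[], by simp, by simp⟩
  have := foldr_max_mem hne
  rw [List.mem_map] at this
  obtain ⟨l, hl, hlen⟩ := this
  rw [List.mem_filter, List.mem_sublists] at hl
  exact ⟨l, hl.1, by simpa using hl.2, hlen⟩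

lemma chainSupLen_le_of_forall {R : ℕ → ℕ → Prop} [DecidableRel R] {w : List ℕ} {N : ℕ}
    (h : ∀ l : List ℕ, l.Sublist w → l.IsChain R → l.length ≤ N) : chainSupLen R w ≤ N := by
  obtain ⟨l, hl, hc, hlen⟩ := chainSupLen_spec R w
  rw [← hlen]; exact h l hl hc

lemma sublist_triple {m : List ℕ} {p q r : ℕ} (h : m.Sublist [p, q, r]) :
    m = [] ∨ m = [p] ∨ m = [q] ∨ m = [r] ∨ m = [p, q] ∨ m = [p, r] ∨ m = [q, r] ∨ m = [p, q, r] := by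
  rcases List.sublist_cons_iff.mp h with h1 | ⟨m1, rfl, h1⟩ <;>
  [ rcases List.sublist_cons_iff.mp h1 with h2 | ⟨m2, rfl, h2⟩ ;
    rcases List.sublist_cons_iff.mp h1 with h2 | ⟨m2, rfl, h2⟩ ] <;>
  [ rcases List.sublist_cons_iff.mp h2 with h3 | ⟨m3, rfl, h3⟩ ;
    rcases List.sublist_cons_iff.mp h2 with h3 | ⟨m3, rfl, h3⟩ ;
    rcases List.sublist_cons_iff.mp h2 with h3 | ⟨m3, rfl, h3⟩ ;
    rcases List.sublist_cons_iff.mp h2 with h3 | ⟨m3, rfl, h3⟩ ] <;>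
  simp_all [List.sublist_nil]

lemma chain_of_mid {R : ℕ → ℕ → Prop} {l1 l2 m : List ℕ}
    (h : List.IsChain R (l1 ++ m ++ l2)) : List.IsChain R m :=
  h.infix ⟨l1, l2, by simp⟩

lemma chain_mid_replace {R : ℕ → ℕ → Prop} {l1 l2 : List ℕ} {a b a' b' : ℕ}
    (h : List.IsChain R (l1 ++ [a, b] ++ l2))
    (hab' : R a' b')
    (ha : ∀ o, R o a → R o a')
    (hb : ∀ o, R b o → R b' o) :
    List.IsChain R (l1 ++ [a', b'] ++ l2) := by
  rw [List.append_assoc, List.isChain_append, List.isChain_append] at h ⊢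
  obtain ⟨h1, ⟨h2, h3, h4⟩, h5⟩ := h
  refine ⟨h1, ⟨?_, h3, ?_⟩, ?_⟩
  · simpa using hab'
  · simp only [List.getLast?_cons_cons, List.getLast?_singleton, Option.mem_some_iff] at h4 ⊢
    rintro x rfl
    exact fun y hy => hb y (h4 b rfl y hy)
  · simp only [List.cons_append, List.head?_cons, Option.mem_some_iff] at h5 ⊢
    rintro x hx y rfl
    exact ha x (h5 x hx a rfl)

lemma chainSupLen_le_of {R : ℕ → ℕ → Prop} [DecidableRel R] (u v s t : List ℕ)
    (H : ∀ m l1 l2 : List ℕ, m.Sublist s → List.IsChain R (l1 ++ m ++ l2) →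
      ∃ m' : List ℕ, m'.Sublist t ∧ m.length ≤ m'.length ∧ List.IsChain R (l1 ++ m' ++ l2)) :
    chainSupLen R (u ++ s ++ v) ≤ chainSupLen R (u ++ t ++ v) := by
  obtain ⟨l, hl, hc, hlen⟩ := chainSupLen_spec R (u ++ s ++ v)
  rw [← hlen]
  rw [List.append_assoc] at hl
  obtain ⟨l1, l23, rfl, hl1, hl23⟩ := List.sublist_append_iff.mp hl
  obtain ⟨m, l2, rfl, hm, hl2⟩ := List.sublist_append_iff.mp hl23
  rw [← List.append_assoc] at hc
  obtain ⟨m', hm't, hmlen, hc'⟩ := H m l1 l2 hm hc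
  have hsub : (l1 ++ m' ++ l2).Sublist (u ++ t ++ v) := by
    rw [List.append_assoc, List.append_assoc]
    exact hl1.append (hm't.append hl2)
  calc (l1 ++ (m ++ l2)).length ≤ (l1 ++ m' ++ l2).length := by simp; omega
    _ ≤ _ := chainSupLen_ge hsub hc'

lemma knuthStep_lis_le {w π : List ℕ} (h : KnuthStep w π) : lisLen w ≤ lisLen π := by
  obtain ⟨u, v, x, y, z, hxy, hyz, hcase⟩ := h
  rcases hcase with ⟨rfl, rfl⟩ | ⟨rfl, rfl⟩ | ⟨rfl, rfl⟩ | ⟨rfl, rfl⟩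
  · rw [lisLen_eq, lisLen_eq,
        show u ++ y :: x :: z :: v = u ++ [y,x,z] ++ v by simp,
        show u ++ y :: z :: x :: v = u ++ [y,z,x] ++ v by simp]
    apply chainSupLen_le_of
    intro m l1 l2 hm hc
    rcases sublist_triple hm with rfl|rfl|rfl|rfl|rfl|rfl|rfl|rfl <;>
      first
        | (refine ⟨_, ?_, le_rfl, hc⟩; simp; done)
        | (exfalso; have h2 := chain_of_mid hc; simp only [List.isChain_cons_cons, List.isChain_singleton,
            List.isChain_nil, and_true] at h2; omega)
        | exact ⟨[y,z], by simp, by simp, chain_mid_replace hc hyz (fun o h => h.trans hxy) (fun _ h => h)⟩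
  · rw [lisLen_eq, lisLen_eq,
        show u ++ y :: z :: x :: v = u ++ [y,z,x] ++ v by simp,
        show u ++ y :: x :: z :: v = u ++ [y,x,z] ++ v by simp]
    apply chainSupLen_le_of
    intro m l1 l2 hm hc
    rcases sublist_triple hm with rfl|rfl|rfl|rfl|rfl|rfl|rfl|rfl <;>
      first
        | (refine ⟨_, ?_, le_rfl, hc⟩; simp; done)
        | (exfalso; have h2 := chain_of_mid hc; simp only [List.isChain_cons_cons, List.isChain_singleton,
            List.isChain_nil, and_true] at h2; omega)
  · rw [lisLen_eq, lisLen_eq,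
        show u ++ x :: z :: y :: v = u ++ [x,z,y] ++ v by simp,
        show u ++ z :: x :: y :: v = u ++ [z,x,y] ++ v by simp]
    apply chainSupLen_le_of
    intro m l1 l2 hm hc
    rcases sublist_triple hm with rfl|rfl|rfl|rfl|rfl|rfl|rfl|rfl <;>
      first
        | (refine ⟨_, ?_, le_rfl, hc⟩; simp; done)
        | (exfalso; have h2 := chain_of_mid hc; simp only [List.isChain_cons_cons, List.isChain_singleton,
            List.isChain_nil, and_true] at h2; omega)
        | exact ⟨[x,y], by simp, by simp, chain_mid_replace hc hxy (fun _ h => h) (fun o h => hyz.trans h)⟩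
  · rw [lisLen_eq, lisLen_eq,
        show u ++ z :: x :: y :: v = u ++ [z,x,y] ++ v by simp,
        show u ++ x :: z :: y :: v = u ++ [x,z,y] ++ v by simp]
    apply chainSupLen_le_of
    intro m l1 l2 hm hc
    rcases sublist_triple hm with rfl|rfl|rfl|rfl|rfl|rfl|rfl|rfl <;>
      first
        | (refine ⟨_, ?_, le_rfl, hc⟩; simp; done)
        | (exfalso; have h2 := chain_of_mid hc; simp only [List.isChain_cons_cons, List.isChain_singleton,
            List.isChain_nil, and_true] at h2; omega)

lemma knuthStep_lds_le {w π : List ℕ} (h : KnuthStep w π) : ldsLen w ≤ ldsLen π := by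
  obtain ⟨u, v, x, y, z, hxy, hyz, hcase⟩ := h
  rcases hcase with ⟨rfl, rfl⟩ | ⟨rfl, rfl⟩ | ⟨rfl, rfl⟩ | ⟨rfl, rfl⟩
  · rw [ldsLen_eq, ldsLen_eq,
        show u ++ y :: x :: z :: v = u ++ [y,x,z] ++ v by simp,
        show u ++ y :: z :: x :: v = u ++ [y,z,x] ++ v by simp]
    apply chainSupLen_le_of
    intro m l1 l2 hm hc
    rcases sublist_triple hm with rfl|rfl|rfl|rfl|rfl|rfl|rfl|rfl <;>
      first
        | (refine ⟨_, ?_, le_rfl, hc⟩; simp; done)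
        | (exfalso; have h2 := chain_of_mid hc; simp only [List.isChain_cons_cons, List.isChain_singleton,
            List.isChain_nil, and_true] at h2; omega)
  · rw [ldsLen_eq, ldsLen_eq,
        show u ++ y :: z :: x :: v = u ++ [y,z,x] ++ v by simp,
        show u ++ y :: x :: z :: v = u ++ [y,x,z] ++ v by simp]
    apply chainSupLen_le_of
    intro m l1 l2 hm hc
    rcases sublist_triple hm with rfl|rfl|rfl|rfl|rfl|rfl|rfl|rfl <;>
      first
        | (refine ⟨_, ?_, le_rfl, hc⟩; simp; done)
        | (exfalso; have h2 := chain_of_mid hc; simp only [List.isChain_cons_cons, List.isChain_singleton,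
            List.isChain_nil, and_true] at h2; omega)
        | exact ⟨[y,x], by simp, by simp, chain_mid_replace hc hxy (fun o h => hyz.trans h) (fun _ h => h)⟩
  · rw [ldsLen_eq, ldsLen_eq,
        show u ++ x :: z :: y :: v = u ++ [x,z,y] ++ v by simp,
        show u ++ z :: x :: y :: v = u ++ [z,x,y] ++ v by simp]
    apply chainSupLen_le_of
    intro m l1 l2 hm hc
    rcases sublist_triple hm with rfl|rfl|rfl|rfl|rfl|rfl|rfl|rfl <;>
      first
        | (refine ⟨_, ?_, le_rfl, hc⟩; simp; done)
        | (exfalso; have h2 := chain_of_mid hc; simp only [List.isChain_cons_cons, List.isChain_singleton,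
            List.isChain_nil, and_true] at h2; omega)
  · rw [ldsLen_eq, ldsLen_eq,
        show u ++ z :: x :: y :: v = u ++ [z,x,y] ++ v by simp,
        show u ++ x :: z :: y :: v = u ++ [x,z,y] ++ v by simp]
    apply chainSupLen_le_of
    intro m l1 l2 hm hc
    rcases sublist_triple hm with rfl|rfl|rfl|rfl|rfl|rfl|rfl|rfl <;>
      first
        | (refine ⟨_, ?_, le_rfl, hc⟩; simp; done)
        | (exfalso; have h2 := chain_of_mid hc; simp only [List.isChain_cons_cons, List.isChain_singleton,
            List.isChain_nil, and_true] at h2; omega)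
        | exact ⟨[z,y], by simp, by simp, chain_mid_replace hc hyz (fun _ h => h) (fun o h => h.trans hxy)⟩

lemma knuthStep_symm {w π : List ℕ} (h : KnuthStep w π) : KnuthStep π w := by
  obtain ⟨u, v, x, y, z, hxy, hyz, hcase⟩ := h
  exact ⟨u, v, x, y, z, hxy, hyz, by tauto⟩

lemma knuthStep_perm {w π : List ℕ} (h : KnuthStep w π) : w.Perm π := by
  obtain ⟨u, v, x, y, z, _, _, hcase⟩ := h
  rcases hcase with ⟨rfl, rfl⟩|⟨rfl, rfl⟩|⟨rfl, rfl⟩|⟨rfl, rfl⟩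
  · exact List.Perm.append_left u ((List.Perm.swap z x v).cons y)
  · exact List.Perm.append_left u ((List.Perm.swap x z v).cons y)
  · exact List.Perm.append_left u (List.Perm.swap z x (y :: v))
  · exact List.Perm.append_left u (List.Perm.swap x z (y :: v))

lemma knuthEquiv_facts {w0 w : List ℕ} (h : Relation.ReflTransGen KnuthStep w0 w) :
    lisLen w = lisLen w0 ∧ ldsLen w = ldsLen w0 ∧ w.Perm w0 := by
  induction h with
  | refl => exact ⟨rfl, rfl, List.Perm.refl _⟩
  | tail hs hstep ih =>
    obtain ⟨h1, h2, h3⟩ := ih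
    exact ⟨(le_antisymm (knuthStep_lis_le (knuthStep_symm hstep)) (knuthStep_lis_le hstep)).trans h1,
      (le_antisymm (knuthStep_lds_le (knuthStep_symm hstep)) (knuthStep_lds_le hstep)).trans h2,
      (knuthStep_perm hstep).symm.trans h3⟩

lemma both_orders {w : List ℕ} (hnd : w.Nodup) {x y : ℕ}
    (h1 : [x, y].Sublist w) (h2 : [y, x].Sublist w) : x = y := by
  induction w with
  | nil => simp at h1
  | cons a w ih =>
    rw [List.nodup_cons] at hnd
    rcases List.sublist_cons_iff.mp h1 with h1' | ⟨r1, hr1, h1'⟩ <;>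
      rcases List.sublist_cons_iff.mp h2 with h2' | ⟨r2, hr2, h2'⟩
    · exact ih hnd.2 h1' h2'
    · -- y = a, [x] <+ w, and [x,y] <+ w so y ∈ w
      exfalso
      have hy : y ∈ w := (h1'.subset) (by simp)
      rw [List.cons_eq_cons] at hr2
      exact hnd.1 (hr2.1 ▸ hy)
    · exfalso
      have hx : x ∈ w := (h2'.subset) (by simp)
      rw [List.cons_eq_cons] at hr1
      exact hnd.1 (hr1.1 ▸ hx)
    · rw [List.cons_eq_cons] at hr1 hr2
      rw [hr1.1, hr2.1]

lemma sorted_pair_sublist {l : List ℕ} (hp : l.Pairwise (· < ·)) {u v : ℕ}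
    (hu : u ∈ l) (hv : v ∈ l) (huv : u < v) : [u, v].Sublist l := by
  induction l with
  | nil => simp at hu
  | cons a l ih =>
    rw [List.pairwise_cons] at hp
    rcases List.mem_cons.mp hu with rfl | hu'
    · have hv' : v ∈ l := by
        rcases List.mem_cons.mp hv with rfl | hv' <;> [omega; exact hv']
      exact List.cons_sublist_cons.mpr (List.singleton_sublist.mpr hv')
    · have hu2 : u ∈ l := hu'
      have hv' : v ∈ l := by
        rcases List.mem_cons.mp hv with rfl | hv'
        · exact absurd (hp.1 u hu2) (by omega)
        · exact hv'
      exact (ih hp.2 hu2 hv').cons a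

lemma two_missing {w l : List ℕ} (hnd : w.Nodup) (hl : l.Sublist w) {e1 e2 : ℕ}
    (h1 : e1 ∈ w) (h2 : e2 ∈ w) (hne : e1 ≠ e2) (m1 : e1 ∉ l) (m2 : e2 ∉ l) :
    l.length + 2 ≤ w.length := by
  classical
  have hlnd : l.Nodup := hnd.sublist hl
  have hsub : insert e1 (insert e2 l.toFinset) ⊆ w.toFinset := by
    intro t ht
    simp only [Finset.mem_insert, List.mem_toFinset] at ht
    rcases ht with rfl | rfl | ht
    · exact List.mem_toFinset.mpr h1
    · exact List.mem_toFinset.mpr h2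
    · exact List.mem_toFinset.mpr (hl.subset ht)
  have hcard : (insert e1 (insert e2 l.toFinset)).card = l.length + 2 := by
    rw [Finset.card_insert_of_notMem (by simp [hne, m1]),
      Finset.card_insert_of_notMem (by simp [m2]),
      List.toFinset_card_of_nodup hlnd]
  have := Finset.card_le_card hsub
  rw [hcard, List.toFinset_card_of_nodup hnd] at this
  omega

lemma contains3412_lis {w : List ℕ} (hnd : w.Nodup) (h : Contains3412 w) :
    lisLen w ≤ w.length - 2 := by
  obtain ⟨a, b, c, d, hcd, hda, hab, hsub⟩ := h
  rw [lisLen_eq]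
  apply chainSupLen_le_of_forall
  intro l hl hc
  have hpl : l.Pairwise (· < ·) := List.isChain_iff_pairwise.mp hc
  have key : ∀ u' v' : ℕ, v' < u' → [u', v'].Sublist w → ¬(u' ∈ l ∧ v' ∈ l) := by
    rintro u' v' hlt hsubw ⟨hu, hv⟩
    have hvu : [v', u'].Sublist l := sorted_pair_sublist hpl hv hu hlt
    exact absurd (both_orders hnd hsubw (hvu.trans hl)) (by omega)
  have hac := key a c (by omega) ((by simp : [a, c].Sublist [a, b, c, d]).trans hsub)
  have had := key a d (by omega) ((by simp : [a, d].Sublist [a, b, c, d]).trans hsub)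
  have hbc := key b c (by omega) ((by simp : [b, c].Sublist [a, b, c, d]).trans hsub)
  have hbd := key b d (by omega) ((by simp : [b, d].Sublist [a, b, c, d]).trans hsub)
  have hmiss : (a ∉ l ∧ b ∉ l) ∨ (c ∉ l ∧ d ∉ l) := by tauto
  rcases hmiss with ⟨m1, m2⟩ | ⟨m1, m2⟩
  · have := two_missing hnd hl (hsub.subset (by simp)) (hsub.subset (by simp))
      (by omega : a ≠ b) m1 m2
    omega
  · have := two_missing hnd hl (hsub.subset (by simp)) (hsub.subset (by simp))
      (by omega : c ≠ d) m1 m2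
    omega

lemma contains4231_lds {w : List ℕ} (h : Contains4231 w) : 3 ≤ ldsLen w := by
  obtain ⟨a, b, c, d, hdb, hbc, hca, hsub⟩ := h
  rw [ldsLen_eq]
  have : ([a, c, d] : List ℕ).length = 3 := rfl
  rw [← this]
  exact chainSupLen_ge ((by simp : [a, c, d].Sublist [a, b, c, d]).trans hsub)
    (by simp [List.isChain_cons_cons]; omega)

lemma mem_ascFromTo {lo hi x : ℕ} (h : x ∈ ascFromTo lo hi) : lo ≤ x ∧ x ≤ hi := by
  simp only [ascFromTo, List.mem_map, List.mem_range] at h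
  obtain ⟨i, hi', rfl⟩ := h
  omega

lemma pairwise_ascFromTo (lo hi : ℕ) : (ascFromTo lo hi).Pairwise (· < ·) := by
  unfold ascFromTo
  exact List.pairwise_lt_range.map _ (fun a b h => by omega)

lemma length_ascFromTo (lo hi : ℕ) : (ascFromTo lo hi).length = hi + 1 - lo := by
  simp [ascFromTo]

lemma decr_sublist_of_pairwise {L l : List ℕ} (hp : L.Pairwise (· < ·)) (hl : l.Sublist L)
    (hc : List.IsChain (· > ·) l) : l.length ≤ 1 := by
  match l with
  | [] => simp
  | [a] => simp
  | a :: b :: l' =>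
    exfalso
    have h1 : a > b := (List.isChain_cons_cons.mp hc).1
    have h2 : a < b := by
      have := hp.sublist hl
      exact (List.pairwise_cons.mp this).1 b (by simp)
    omega

theorem stmt5 (n k : ℕ) (hk : 2 ≤ k) (hkn : k ≤ n) (w : List ℕ)
    (hw : KnuthEquiv (k :: (ascFromTo 1 (k - 1) ++ ascFromTo (k + 1) n)) w) :
    ¬ Contains3412 w ∧ ¬ Contains4231 w := by
  set w0 : List ℕ := k :: (ascFromTo 1 (k - 1) ++ ascFromTo (k + 1) n) with hw0
  obtain ⟨hlis, hlds, hperm⟩ := knuthEquiv_facts hw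
  have hpw : (ascFromTo 1 (k - 1) ++ ascFromTo (k + 1) n).Pairwise (· < ·) := by
    refine List.pairwise_append.mpr ⟨pairwise_ascFromTo _ _, pairwise_ascFromTo _ _, ?_⟩
    intro a ha b hb
    have := mem_ascFromTo ha
    have := mem_ascFromTo hb
    omega
  have hnd0 : w0.Nodup := by
    rw [hw0, List.nodup_cons]
    constructor
    · intro hmem
      rcases List.mem_append.mp hmem with h | h <;>
        [skip; skip] <;> · have := mem_ascFromTo h; omega
    · exact hpw.imp (fun h => Nat.ne_of_lt h)
  have hlen0 : w0.length = n := by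
    rw [hw0]
    simp [length_ascFromTo]
    omega
  have hlis0 : n - 1 ≤ lisLen w0 := by
    rw [lisLen_eq]
    have hsub : (ascFromTo 1 (k - 1) ++ ascFromTo (k + 1) n).Sublist w0 :=
      List.sublist_cons_self _ _
    have hlen : (ascFromTo 1 (k - 1) ++ ascFromTo (k + 1) n).length = n - 1 := by
      simp [length_ascFromTo]; omega
    rw [← hlen]
    exact chainSupLen_ge hsub (List.isChain_iff_pairwise.mpr hpw)
  have hlds0 : ldsLen w0 ≤ 2 := by
    rw [ldsLen_eq]
    apply chainSupLen_le_of_forall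
    intro l hl hc
    rw [hw0] at hl
    rcases List.sublist_cons_iff.mp hl with h | ⟨r, rfl, h⟩
    · have := decr_sublist_of_pairwise hpw h hc
      omega
    · have hcr : List.IsChain (· > ·) r := hc.tail
      have := decr_sublist_of_pairwise hpw h hcr
      simp only [List.length_cons]
      omega
  have hndw : w.Nodup := hperm.nodup_iff.mpr hnd0
  have hlenw : w.length = n := hperm.length_eq.trans hlen0
  constructor
  · intro h3412
    have h1 := contains3412_lis hndw h3412
    omega
  · intro h4231
    have h1 := contains4231_lds h4231
    omega
end

section
/- For 1 ≤ i ≤ n, every permutation in S_n that is Knuth equivalent to (i, i-1, ..., 2, 1, i+1, i+2, ..., n) avoids both the pattern 3412 and the pattern 4231. -/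
section Aux

lemma desc_pairwise (i : ℕ) : (descFromTo i 1).Pairwise (· > ·) := by
  unfold descFromTo
  rw [List.pairwise_map]
  exact (List.pairwise_lt_range).imp_of_mem (by
    intro a b ha hb hab
    simp only [List.mem_range] at ha hb
    omega)

lemma asc_pairwise (lo n : ℕ) : (ascFromTo lo n).Pairwise (· < ·) := by
  unfold ascFromTo
  rw [List.pairwise_map]
  exact (List.pairwise_lt_range).imp (by omega)

lemma mem_desc {i a : ℕ} (h : a ∈ descFromTo i 1) : a ≤ i := by
  unfold descFromTo at h
  simp only [List.mem_map, List.mem_range] at h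
  obtain ⟨j, _, rfl⟩ := h
  omega

lemma mem_asc {i n a : ℕ} (h : a ∈ ascFromTo (i + 1) n) : i < a := by
  unfold ascFromTo at h
  simp only [List.mem_map, List.mem_range] at h
  obtain ⟨j, _, rfl⟩ := h
  omega

/-- The invariant preserved by Knuth steps. -/
def KInv (n i : ℕ) (w : List ℕ) : Prop :=
  w.filter (fun a => decide (a ≤ i)) = descFromTo i 1 ∧
  w.filter (fun a => decide (i < a)) = ascFromTo (i + 1) n

lemma kinv_init (n i : ℕ) : KInv n i (descFromTo i 1 ++ ascFromTo (i + 1) n) := by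
  constructor
  · rw [List.filter_append, List.filter_eq_self.mpr (by intro a ha; simpa using mem_desc ha),
      List.filter_eq_nil_iff.mpr (by intro a ha; simpa using Nat.not_le.mpr (mem_asc ha)),
      List.append_nil]
  · rw [List.filter_append, List.filter_eq_nil_iff.mpr
        (by intro a ha; simpa using Nat.not_lt.mpr (mem_desc ha)),
      List.filter_eq_self.mpr (by intro a ha; simpa using mem_asc ha), List.nil_append]

lemma sublist_mid {l m u v : List ℕ} (h : l.Sublist m) : l.Sublist (u ++ (m ++ v)) :=
  (h.trans (List.sublist_append_left m v)).trans (List.sublist_append_right u (m ++ v))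

/-- From the invariant: two small elements appearing in order must decrease. -/
lemma kinv_le {n i : ℕ} {w : List ℕ} (hQ : KInv n i w) {p q : ℕ}
    (h : [p, q].Sublist w) (hp : p ≤ i) (hq : q ≤ i) : q < p := by
  have h2 : [p, q].Sublist (descFromTo i 1) := by
    rw [← hQ.1]
    have := h.filter (fun a => decide (a ≤ i))
    simpa [hp, hq] using this
  have := (desc_pairwise i).sublist h2
  simp only [List.pairwise_cons, List.mem_singleton, List.mem_cons] at this
  exact this.1 q (Or.inl rfl)

/-- From the invariant: two big elements appearing in order must increase. -/
lemma kinv_gt {n i : ℕ} {w : List ℕ} (hQ : KInv n i w) {p q : ℕ}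
    (h : [p, q].Sublist w) (hp : i < p) (hq : i < q) : p < q := by
  have h2 : [p, q].Sublist (ascFromTo (i + 1) n) := by
    rw [← hQ.2]
    have := h.filter (fun a => decide (i < a))
    simpa [hp, hq] using this
  have := (asc_pairwise (i + 1) n).sublist h2
  simp only [List.pairwise_cons, List.mem_singleton, List.mem_cons] at this
  exact this.1 q (Or.inl rfl)

lemma kinv_step {n i : ℕ} {w π : List ℕ} (hQ : KInv n i w) (h : KnuthStep w π) :
    KInv n i π := by
  obtain ⟨u, v, x, y, z, hxy, hyz, hc⟩ := h
  have hxz : x < z := lt_trans hxy hyz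
  rcases hc with ⟨hw, hp⟩ | ⟨hw, hp⟩ | ⟨hw, hp⟩ | ⟨hw, hp⟩ <;> subst hw <;> subst hp
  · -- w = u ++ y :: x :: z :: v, π = u ++ y :: z :: x :: v
    have hxi : x ≤ i := by
      by_contra hx
      push_neg at hx
      have hs : [y, x].Sublist (u ++ (y :: x :: z :: v)) := by
        refine sublist_mid (u := u) (v := v) (m := [y, x, z]) ?_
        exact .cons₂ y (.cons₂ x (List.nil_sublist _))
      exact absurd (kinv_gt hQ hs (lt_trans hx hxy) hx) (by omega)
    have hzi : i < z := by
      by_contra hz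
      push_neg at hz
      have hs : [x, z].Sublist (u ++ (y :: x :: z :: v)) := by
        refine sublist_mid (u := u) (v := v) (m := [y, x, z]) ?_
        exact .cons y (.cons₂ x (.cons₂ z (List.nil_sublist _)))
      exact absurd (kinv_le hQ hs (le_trans (le_of_lt hxz) hz) hz) (by omega)
    obtain ⟨h1, h2⟩ := hQ
    rw [List.filter_append] at h1 h2
    constructor
    · rw [List.filter_append, ← h1]
      congr 1
      simp [List.filter_cons, hxi, Nat.not_le.mpr hzi]
    · rw [List.filter_append, ← h2]
      congr 1
      simp [List.filter_cons, hzi, Nat.not_lt.mpr hxi]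
  · -- w = u ++ y :: z :: x :: v, π = u ++ y :: x :: z :: v
    have hzi : i < z := by
      by_contra hz
      push_neg at hz
      have hs : [y, z].Sublist (u ++ (y :: z :: x :: v)) := by
        refine sublist_mid (u := u) (v := v) (m := [y, z, x]) ?_
        exact .cons₂ y (.cons₂ z (List.nil_sublist _))
      exact absurd (kinv_le hQ hs (le_trans (le_of_lt hyz) hz) hz) (by omega)
    have hxi : x ≤ i := by
      by_contra hx
      push_neg at hx
      have hs : [z, x].Sublist (u ++ (y :: z :: x :: v)) := by
        refine sublist_mid (u := u) (v := v) (m := [y, z, x]) ?_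
        exact .cons y (.cons₂ z (.cons₂ x (List.nil_sublist _)))
      exact absurd (kinv_gt hQ hs (lt_trans hx hxz) hx) (by omega)
    obtain ⟨h1, h2⟩ := hQ
    rw [List.filter_append] at h1 h2
    constructor
    · rw [List.filter_append, ← h1]
      congr 1
      simp [List.filter_cons, hxi, Nat.not_le.mpr hzi]
    · rw [List.filter_append, ← h2]
      congr 1
      simp [List.filter_cons, hzi, Nat.not_lt.mpr hxi]
  · -- w = u ++ x :: z :: y :: v, π = u ++ z :: x :: y :: v
    have hxi : x ≤ i := by
      by_contra hx
      push_neg at hx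
      have hs : [z, y].Sublist (u ++ (x :: z :: y :: v)) := by
        refine sublist_mid (u := u) (v := v) (m := [x, z, y]) ?_
        exact .cons x (.cons₂ z (.cons₂ y (List.nil_sublist _)))
      exact absurd (kinv_gt hQ hs (lt_trans hx hxz) (lt_trans hx hxy)) (by omega)
    have hzi : i < z := by
      by_contra hz
      push_neg at hz
      have hs : [x, z].Sublist (u ++ (x :: z :: y :: v)) := by
        refine sublist_mid (u := u) (v := v) (m := [x, z, y]) ?_
        exact .cons₂ x (.cons₂ z (List.nil_sublist _))
      exact absurd (kinv_le hQ hs (le_trans (le_of_lt hxz) hz) hz) (by omega)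
    obtain ⟨h1, h2⟩ := hQ
    rw [List.filter_append] at h1 h2
    constructor
    · rw [List.filter_append, ← h1]
      congr 1
      simp [List.filter_cons, hxi, Nat.not_le.mpr hzi]
    · rw [List.filter_append, ← h2]
      congr 1
      simp [List.filter_cons, hzi, Nat.not_lt.mpr hxi]
  · -- w = u ++ z :: x :: y :: v, π = u ++ x :: z :: y :: v
    have hxi : x ≤ i := by
      by_contra hx
      push_neg at hx
      have hs : [z, x].Sublist (u ++ (z :: x :: y :: v)) := by
        refine sublist_mid (u := u) (v := v) (m := [z, x, y]) ?_
        exact .cons₂ z (.cons₂ x (List.nil_sublist _))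
      exact absurd (kinv_gt hQ hs (lt_trans hx hxz) hx) (by omega)
    have hzi : i < z := by
      by_contra hz
      push_neg at hz
      have hs : [x, y].Sublist (u ++ (z :: x :: y :: v)) := by
        refine sublist_mid (u := u) (v := v) (m := [z, x, y]) ?_
        exact .cons z (.cons₂ x (.cons₂ y (List.nil_sublist _)))
      exact absurd (kinv_le hQ hs (le_trans (le_of_lt hxy) (le_trans (le_of_lt hyz) hz))
        (le_trans (le_of_lt hyz) hz)) (by omega)
    obtain ⟨h1, h2⟩ := hQ
    rw [List.filter_append] at h1 h2
    constructor
    · rw [List.filter_append, ← h1]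
      congr 1
      simp [List.filter_cons, hxi, Nat.not_le.mpr hzi]
    · rw [List.filter_append, ← h2]
      congr 1
      simp [List.filter_cons, hzi, Nat.not_lt.mpr hxi]

end Aux

theorem stmt6 (n i : ℕ) (hi : 1 ≤ i) (hin : i ≤ n) (w : List ℕ)
    (hw : KnuthEquiv (descFromTo i 1 ++ ascFromTo (i + 1) n) w) :
    ¬ Contains3412 w ∧ ¬ Contains4231 w := by
  have hQ : KInv n i w := by
    induction hw with
    | refl => exact kinv_init n i
    | tail _ hstep ih => exact kinv_step ih hstep
  constructor
  · rintro ⟨a, b, c, d, hcd, hda, hab, hs⟩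
    have hcd' : [c, d].Sublist w :=
      (List.Sublist.cons a (List.Sublist.cons b (List.Sublist.refl [c, d]))).trans hs
    rcases le_or_gt a i with ha | ha
    · exact absurd (kinv_le hQ hcd' (by omega) (by omega)) (by omega)
    · rcases le_or_gt d i with hd | hd
      · exact absurd (kinv_le hQ hcd' (by omega) hd) (by omega)
      · have had : [a, d].Sublist w :=
          (List.Sublist.cons₂ a (List.Sublist.cons b (List.Sublist.cons c
            (List.Sublist.refl [d])))).trans hs
        exact absurd (kinv_gt hQ had ha hd) (by omega)
  · rintro ⟨a, b, c, d, hdb, hbc, hca, hs⟩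
    have hbc' : [b, c].Sublist w :=
      (List.Sublist.cons a (List.Sublist.cons₂ b (List.Sublist.cons₂ c
        (List.nil_sublist [d])))).trans hs
    rcases le_or_gt a i with ha | ha
    · exact absurd (kinv_le hQ hbc' (by omega) (by omega)) (by omega)
    · rcases le_or_gt c i with hc | hc
      · exact absurd (kinv_le hQ hbc' (by omega) hc) (by omega)
      · have hac : [a, c].Sublist w :=
          (List.Sublist.cons₂ a (List.Sublist.cons b (List.Sublist.cons₂ c
            (List.nil_sublist [d])))).trans hs
        exact absurd (kinv_gt hQ hac ha hc) (by omega)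
end

section
/- For 1 ≤ i ≤ n, every permutation in S_n that is Knuth equivalent to (n, n-1, ..., i+1, 1, 2, ..., i) avoids both the pattern 3412 and the pattern 4231. -/
section Aux

/-- Invariant: values ≤ i appear in increasing order, values > i in decreasing order. -/
def GoodWord (i : ℕ) (w : List ℕ) : Prop :=
  (w.filter (fun a => a ≤ i)).Pairwise (· < ·) ∧
  (w.filter (fun a => i < a)).Pairwise (· > ·)

lemma pairwise_mid {R : ℕ → ℕ → Prop} {l1 l2 : List ℕ} {p q : ℕ}
    (h : (l1 ++ p :: q :: l2).Pairwise R) : R p q := by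
  have h2 := (List.pairwise_append.mp h).2.1
  exact (List.pairwise_cons.mp h2).1 q (by simp)

lemma pairwise_mid2 {R : ℕ → ℕ → Prop} {l1 l2 : List ℕ} {p q r : ℕ}
    (h : (l1 ++ p :: q :: r :: l2).Pairwise R) : R q r := by
  have h2 := (List.pairwise_append.mp h).2.1
  exact (List.pairwise_cons.mp (List.pairwise_cons.mp h2).2).1 r (by simp)

lemma filtL_pos {i a : ℕ} (l : List ℕ) (h : a ≤ i) :
    List.filter (fun b => b ≤ i) (a :: l) = a :: List.filter (fun b => b ≤ i) l := by simp [h]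

lemma filtL_neg {i a : ℕ} (l : List ℕ) (h : i < a) :
    List.filter (fun b => b ≤ i) (a :: l) = List.filter (fun b => b ≤ i) l := by
  simp [Nat.not_le.mpr h]

lemma filtG_pos {i a : ℕ} (l : List ℕ) (h : i < a) :
    List.filter (fun b => i < b) (a :: l) = a :: List.filter (fun b => i < b) l := by simp [h]

lemma filtG_neg {i a : ℕ} (l : List ℕ) (h : a ≤ i) :
    List.filter (fun b => i < b) (a :: l) = List.filter (fun b => i < b) l := by
  simp [Nat.not_lt.mpr h]

lemma good_step {i : ℕ} {w π : List ℕ}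
    (h : ∃ u v : List ℕ, ∃ x y z : ℕ, x < y ∧ y < z ∧
      ((w = u ++ y :: x :: z :: v ∧ π = u ++ y :: z :: x :: v) ∨
       (w = u ++ y :: z :: x :: v ∧ π = u ++ y :: x :: z :: v) ∨
       (w = u ++ x :: z :: y :: v ∧ π = u ++ z :: x :: y :: v) ∨
       (w = u ++ z :: x :: y :: v ∧ π = u ++ x :: z :: y :: v)))
    (hg : GoodWord i w) : GoodWord i π := by
  obtain ⟨u, v, x, y, z, hxy, hyz, hc⟩ := h
  rcases hc with ⟨rfl, rfl⟩ | ⟨rfl, rfl⟩ | ⟨rfl, rfl⟩ | ⟨rfl, rfl⟩ <;>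
    obtain ⟨hA, hB⟩ := hg
  -- case 1 : w = u ++ y :: x :: z :: v   (impossible)
  · exfalso
    rcases le_or_gt y i with hy | hy
    · have hx : x ≤ i := le_trans hxy.le hy
      rw [List.filter_append, filtL_pos _ hy, filtL_pos _ hx] at hA
      exact absurd (pairwise_mid hA) (by omega)
    · have hz : i < z := lt_trans hy hyz
      rcases le_or_gt x i with hx | hx
      · rw [List.filter_append, filtG_pos _ hy, filtG_neg _ hx, filtG_pos _ hz] at hB
        exact absurd (pairwise_mid hB) (by omega)
      · rw [List.filter_append, filtG_pos _ hy, filtG_pos _ hx, filtG_pos _ hz] at hB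
        exact absurd (pairwise_mid2 hB) (by omega)
  -- case 2 : w = u ++ y :: z :: x :: v   (impossible)
  · exfalso
    rcases le_or_gt y i with hy | hy
    · have hx : x ≤ i := le_trans hxy.le hy
      rcases le_or_gt z i with hz | hz
      · rw [List.filter_append, filtL_pos _ hy, filtL_pos _ hz, filtL_pos _ hx] at hA
        exact absurd (pairwise_mid2 hA) (by omega)
      · rw [List.filter_append, filtL_pos _ hy, filtL_neg _ hz, filtL_pos _ hx] at hA
        exact absurd (pairwise_mid hA) (by omega)
    · have hz : i < z := lt_trans hy hyz
      rw [List.filter_append, filtG_pos _ hy, filtG_pos _ hz] at hB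
      exact absurd (pairwise_mid hB) (by omega)
  -- case 3 : w = u ++ x :: z :: y :: v, π = u ++ z :: x :: y :: v
  · rcases le_or_gt z i with hz | hz
    · exfalso
      have hy : y ≤ i := le_trans hyz.le hz
      have hx : x ≤ i := le_trans hxy.le hy
      rw [List.filter_append, filtL_pos _ hx, filtL_pos _ hz, filtL_pos _ hy] at hA
      exact absurd (pairwise_mid2 hA) (by omega)
    · rcases le_or_gt x i with hx | hx
      · constructor
        · rw [List.filter_append, filtL_neg _ hz, filtL_pos _ hx]
          rw [List.filter_append, filtL_pos _ hx, filtL_neg _ hz] at hA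
          exact hA
        · rw [List.filter_append, filtG_pos _ hz, filtG_neg _ hx]
          rw [List.filter_append, filtG_neg _ hx, filtG_pos _ hz] at hB
          exact hB
      · exfalso
        rw [List.filter_append, filtG_pos _ hx, filtG_pos _ hz] at hB
        exact absurd (pairwise_mid hB) (by omega)
  -- case 4 : w = u ++ z :: x :: y :: v, π = u ++ x :: z :: y :: v
  · rcases le_or_gt z i with hz | hz
    · exfalso
      have hx : x ≤ i := le_trans hxy.le (le_trans hyz.le hz)
      rw [List.filter_append, filtL_pos _ hz, filtL_pos _ hx] at hA
      exact absurd (pairwise_mid hA) (by omega)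
    · rcases le_or_gt x i with hx | hx
      · constructor
        · rw [List.filter_append, filtL_pos _ hx, filtL_neg _ hz]
          rw [List.filter_append, filtL_neg _ hz, filtL_pos _ hx] at hA
          exact hA
        · rw [List.filter_append, filtG_neg _ hx, filtG_pos _ hz]
          rw [List.filter_append, filtG_pos _ hz, filtG_neg _ hx] at hB
          exact hB
      · exfalso
        have hy : i < y := lt_trans hx hxy
        rw [List.filter_append, filtG_pos _ hz, filtG_pos _ hx, filtG_pos _ hy] at hB
        exact absurd (pairwise_mid2 hB) (by omega)

lemma rel_of_sublist {R : ℕ → ℕ → Prop} {f : ℕ → Bool} {w : List ℕ} {p q : ℕ}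
    (hP : (w.filter f).Pairwise R) (hs : [p, q].Sublist w)
    (hp : f p = true) (hq : f q = true) : R p q := by
  have h2 : [p, q].Sublist (w.filter f) := by
    have := hs.filter f
    simpa [List.filter, hp, hq] using this
  have h3 := hP.sublist h2
  exact (List.pairwise_cons.mp h3).1 q (by simp)

end Aux

section Aux2

lemma good_init {n i : ℕ} (hi : 1 ≤ i) (hin : i ≤ n) :
    GoodWord i (descFromTo n (i + 1) ++ ascFromTo 1 i) := by
  have hdesc : ∀ a ∈ descFromTo n (i + 1), i < a := by
    intro a ha
    simp only [descFromTo, List.mem_map, List.mem_range] at ha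
    obtain ⟨j, hj, rfl⟩ := ha; omega
  have hasc : ∀ a ∈ ascFromTo 1 i, a ≤ i := by
    intro a ha
    simp only [ascFromTo, List.mem_map, List.mem_range] at ha
    obtain ⟨j, hj, rfl⟩ := ha; omega
  constructor
  · rw [List.filter_append]
    rw [List.filter_eq_nil_iff.mpr (by intro a ha; simpa using Nat.not_le.mpr (hdesc a ha)),
      List.filter_eq_self.mpr (by intro a ha; simpa using hasc a ha)]
    rw [List.nil_append, List.pairwise_iff_getElem]
    intro a b ha hb hab
    simp only [ascFromTo, List.length_map, List.length_range] at ha hb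
    simp only [ascFromTo, List.getElem_map, List.getElem_range]
    omega
  · rw [List.filter_append]
    rw [List.filter_eq_self.mpr (by intro a ha; simpa using hdesc a ha),
      List.filter_eq_nil_iff.mpr (by intro a ha; simpa using Nat.not_lt.mpr (hasc a ha)),
      List.append_nil, List.pairwise_iff_getElem]
    intro a b ha hb hab
    simp only [descFromTo, List.length_map, List.length_range] at ha hb
    simp only [descFromTo, List.getElem_map, List.getElem_range]
    omega

lemma good_avoid3412 {i : ℕ} {w : List ℕ} (h : GoodWord i w) :
    ¬ ∃ a b c d : ℕ, c < d ∧ d < a ∧ a < b ∧ [a, b, c, d].Sublist w := by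
  rintro ⟨a, b, c, d, h1, h2, h3, hs⟩
  have sab : [a, b].Sublist w := (List.sublist_append_left [a, b] [c, d]).trans hs
  have sac : [a, c].Sublist w :=
    ((((List.nil_sublist [d]).cons₂ c).cons b).cons₂ a).trans hs
  rcases le_or_gt a i with ha | ha
  · have hc : c ≤ i := by omega
    have := rel_of_sublist h.1 sac (by simpa using ha) (by simpa using hc)
    omega
  · rcases le_or_gt b i with hb | hb
    · omega
    · have := rel_of_sublist h.2 sab (by simpa using ha) (by simpa using hb)
      omega

lemma good_avoid4231 {i : ℕ} {w : List ℕ} (h : GoodWord i w) :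
    ¬ ∃ a b c d : ℕ, d < b ∧ b < c ∧ c < a ∧ [a, b, c, d].Sublist w := by
  rintro ⟨a, b, c, d, h1, h2, h3, hs⟩
  have sab : [a, b].Sublist w := (List.sublist_append_left [a, b] [c, d]).trans hs
  have sbc : [b, c].Sublist w :=
    ((List.sublist_append_left [b, c] [d]).cons a).trans hs
  have sbd : [b, d].Sublist w :=
    ((((List.Sublist.refl [d]).cons c).cons₂ b).cons a).trans hs
  rcases le_or_gt a i with ha | ha
  · have hb : b ≤ i := by omega
    have := rel_of_sublist h.1 sab (by simpa using ha) (by simpa using hb)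
    omega
  · rcases le_or_gt b i with hb | hb
    · have hd : d ≤ i := by omega
      have := rel_of_sublist h.1 sbd (by simpa using hb) (by simpa using hd)
      omega
    · have hc : i < c := by omega
      have := rel_of_sublist h.2 sbc (by simpa using hb) (by simpa using hc)
      omega

end Aux2

theorem stmt7 (n i : ℕ) (hi : 1 ≤ i) (hin : i ≤ n) (w : List ℕ)
    (hw : KnuthEquiv (descFromTo n (i + 1) ++ ascFromTo 1 i) w) :
    ¬ Contains3412 w ∧ ¬ Contains4231 w := by
  have hgood : GoodWord i w := by
    induction hw with
    | refl => exact good_init hi hin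
    | tail _ hstep ih => exact good_step hstep ih
  exact ⟨good_avoid3412 hgood, good_avoid4231 hgood⟩
end

section
/- For k and i with 1 ≤ i < k ≤ n and k ≤ n, every permutation in S_n Knuth equivalent to (k-1, k-2, ..., i+1, 1, 2, ..., i, k, k+1, ..., n) avoids both the pattern 3412 and the pattern 4231. -/
def Pre (w : List ℕ) (a b : ℕ) : Prop :=
  a ∈ w ∧ b ∈ w ∧ w.idxOf a < w.idxOf b

lemma Pre.trans {w : List ℕ} {a b c : ℕ} (h1 : Pre w a b) (h2 : Pre w b c) : Pre w a c :=
  ⟨h1.1, h2.2.1, h1.2.2.trans h2.2.2⟩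

lemma Pre.asymm {w : List ℕ} {a b : ℕ} (h1 : Pre w a b) (h2 : Pre w b a) : False := by
  have := h1.2.2; have := h2.2.2; omega

lemma mem_oneLine {n : ℕ} {w : List ℕ} (h : IsOneLine n w) (e : ℕ) :
    e ∈ w ↔ 1 ≤ e ∧ e ≤ n := by
  rw [h.mem_iff]
  simp only [List.mem_map, List.mem_range]
  constructor
  · rintro ⟨j, hj, rfl⟩; omega
  · intro he; exact ⟨e - 1, by omega, by omega⟩

lemma oneLine_nodup {n : ℕ} {w : List ℕ} (h : IsOneLine n w) : w.Nodup := by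
  refine h.nodup_iff.mpr ?_
  exact List.nodup_range.map (fun a b hab => by omega)

lemma pre_of_sublist {w : List ℕ} (hnd : w.Nodup) {p q : ℕ} (h : [p, q].Sublist w) :
    Pre w p q := by
  induction w with
  | nil => simp at h
  | cons e t ih =>
    have het : e ∉ t := (List.nodup_cons.mp hnd).1
    have hndt : t.Nodup := (List.nodup_cons.mp hnd).2
    rcases h with _ | _
    case cons h' =>
      have hP := ih hndt h'
      obtain ⟨hp, hq, hlt⟩ := hP
      have hpe : p ≠ e := fun hh => het (hh ▸ hp)
      have hqe : q ≠ e := fun hh => het (hh ▸ hq)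
      refine ⟨List.mem_cons_of_mem _ hp, List.mem_cons_of_mem _ hq, ?_⟩
      rw [List.idxOf_cons_ne _ (Ne.symm hpe), List.idxOf_cons_ne _ (Ne.symm hqe)]
      omega
    case cons_cons h' =>
      have hq : q ∈ t := h'.subset (by simp)
      have hqe : q ≠ p := fun hh => het (hh ▸ hq)
      refine ⟨List.mem_cons_self, List.mem_cons_of_mem _ hq, ?_⟩
      rw [List.idxOf_cons_self, List.idxOf_cons_ne _ (Ne.symm hqe)]
      omega

section Swap

variable {A B : List ℕ} {s t : ℕ}

lemma swap_perm : (A ++ s :: t :: B).Perm (A ++ t :: s :: B) :=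
  (List.Perm.swap t s B).append_left A

lemma swap_nodup (hnd : (A ++ s :: t :: B).Nodup) : (A ++ t :: s :: B).Nodup :=
  swap_perm.nodup_iff.mp hnd

lemma swap_facts (hnd : (A ++ s :: t :: B).Nodup) :
    s ∉ A ∧ t ∉ A ∧ s ≠ t ∧ s ∉ B ∧ t ∉ B := by
  rw [List.nodup_append] at hnd
  obtain ⟨-, hcons, hdisj⟩ := hnd
  simp only [List.nodup_cons, List.mem_cons] at hcons
  refine ⟨fun h => hdisj _ h _ (by simp) rfl, fun h => hdisj _ h _ (by simp) rfl, ?_, ?_, ?_⟩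
  · intro h; exact hcons.1 (Or.inl h)
  · intro h; exact hcons.1 (Or.inr h)
  · exact hcons.2.1

lemma swap_idx (hnd : (A ++ s :: t :: B).Nodup) :
    (A ++ s :: t :: B).idxOf s = A.length ∧
    (A ++ s :: t :: B).idxOf t = A.length + 1 ∧
    (A ++ t :: s :: B).idxOf t = A.length ∧
    (A ++ t :: s :: B).idxOf s = A.length + 1 := by
  obtain ⟨hsA, htA, hst, _, _⟩ := swap_facts hnd
  refine ⟨?_, ?_, ?_, ?_⟩
  · rw [List.idxOf_append_of_notMem hsA, List.idxOf_cons_self]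
    omega
  · rw [List.idxOf_append_of_notMem htA, List.idxOf_cons_ne _ hst,
      List.idxOf_cons_self]
  · rw [List.idxOf_append_of_notMem htA, List.idxOf_cons_self]
    omega
  · rw [List.idxOf_append_of_notMem hsA, List.idxOf_cons_ne _ (Ne.symm hst),
      List.idxOf_cons_self]

lemma swap_idx_other (hnd : (A ++ s :: t :: B).Nodup) {e : ℕ}
    (he : e ∈ A ++ s :: t :: B) (hes : e ≠ s) (het : e ≠ t) :
    (A ++ t :: s :: B).idxOf e = (A ++ s :: t :: B).idxOf e ∧
    ((A ++ s :: t :: B).idxOf e < A.length ∨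
      A.length + 2 ≤ (A ++ s :: t :: B).idxOf e) := by
  rcases List.mem_append.mp he with heA | heB
  · rw [List.idxOf_append_of_mem heA, List.idxOf_append_of_mem heA]
    exact ⟨rfl, Or.inl (List.idxOf_lt_length_iff.mpr heA)⟩
  · simp only [List.mem_cons] at heB
    rcases heB with rfl | rfl | heB
    · exact absurd rfl hes
    · exact absurd rfl het
    · have heA : e ∉ A := by
        rw [List.nodup_append] at hnd
        exact fun h => hnd.2.2 _ h _ (by simp [heB]) rfl
    
      rw [List.idxOf_append_of_notMem heA, List.idxOf_append_of_notMem heA,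
        List.idxOf_cons_ne _ (Ne.symm het), List.idxOf_cons_ne _ (Ne.symm hes),
        List.idxOf_cons_ne _ (Ne.symm hes), List.idxOf_cons_ne _ (Ne.symm het)]
      omega

lemma swap_pre_mp (hnd : (A ++ s :: t :: B).Nodup) {p q : ℕ}
    (h1 : ¬(p = s ∧ q = t)) (h2 : ¬(p = t ∧ q = s))
    (hP : Pre (A ++ s :: t :: B) p q) : Pre (A ++ t :: s :: B) p q := by
  obtain ⟨hs1, ht1, ht2, hs2⟩ := swap_idx hnd
  have hmem : ∀ e, e ∈ A ++ s :: t :: B ↔ e ∈ A ++ t :: s :: B :=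
    fun e => swap_perm.mem_iff
  obtain ⟨hp, hq, hlt⟩ := hP
  refine ⟨(hmem p).mp hp, (hmem q).mp hq, ?_⟩
  by_cases hpq : p = q
  · rw [hpq] at hlt; omega
  by_cases hps : p = s
  · have e1 : (A ++ s :: t :: B).idxOf p = A.length := by rw [hps]; exact hs1
    have e2 : (A ++ t :: s :: B).idxOf p = A.length + 1 := by rw [hps]; exact hs2
    by_cases hqt : q = t
    · exact absurd ⟨hps, hqt⟩ h1
    · have hqs : q ≠ s := by rw [← hps]; exact Ne.symm hpq
      obtain ⟨heq, hdi⟩ := swap_idx_other hnd hq hqs hqt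
      omega
  by_cases hpt : p = t
  · have e1 : (A ++ s :: t :: B).idxOf p = A.length + 1 := by rw [hpt]; exact ht1
    have e2 : (A ++ t :: s :: B).idxOf p = A.length := by rw [hpt]; exact ht2
    by_cases hqs : q = s
    · exact absurd ⟨hpt, hqs⟩ h2
    · have hqt : q ≠ t := by rw [← hpt]; exact Ne.symm hpq
      obtain ⟨heq, hdi⟩ := swap_idx_other hnd hq hqs hqt
      omega
  obtain ⟨heqp, hdip⟩ := swap_idx_other hnd hp hps hpt
  by_cases hqs : q = s
  · have e1 : (A ++ s :: t :: B).idxOf q = A.length := by rw [hqs]; exact hs1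
    have e2 : (A ++ t :: s :: B).idxOf q = A.length + 1 := by rw [hqs]; exact hs2
    omega
  by_cases hqt : q = t
  · have e1 : (A ++ s :: t :: B).idxOf q = A.length + 1 := by rw [hqt]; exact ht1
    have e2 : (A ++ t :: s :: B).idxOf q = A.length := by rw [hqt]; exact ht2
    omega
  obtain ⟨heqq, hdiq⟩ := swap_idx_other hnd hq hqs hqt
  omega

lemma swap_pre (hnd : (A ++ s :: t :: B).Nodup) {p q : ℕ}
    (h1 : ¬(p = s ∧ q = t)) (h2 : ¬(p = t ∧ q = s)) :
    Pre (A ++ s :: t :: B) p q ↔ Pre (A ++ t :: s :: B) p q :=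
  ⟨swap_pre_mp hnd h1 h2, swap_pre_mp (swap_nodup hnd) h2 h1⟩

lemma swap_between (hnd : (A ++ s :: t :: B).Nodup) {e : ℕ}
    (hes : e ≠ s) (het : e ≠ t)
    (h1 : Pre (A ++ s :: t :: B) s e) (h2 : Pre (A ++ s :: t :: B) e t) : False := by
  obtain ⟨hs1, ht1, -, -⟩ := swap_idx hnd
  obtain ⟨-, hdi⟩ := swap_idx_other hnd h1.2.1 hes het
  have := h1.2.2; have := h2.2.2; omega

end Swap

section Blocks

lemma mem_asc_s11 {lo hi e : ℕ} : e ∈ ascFromTo lo hi ↔ lo ≤ e ∧ e ≤ hi := by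
  simp only [ascFromTo, List.mem_map, List.mem_range]
  constructor
  · rintro ⟨j, hj, rfl⟩; omega
  · intro h; exact ⟨e - lo, by omega, by omega⟩

lemma mem_desc_s11 {lo hi e : ℕ} : e ∈ descFromTo hi lo ↔ lo ≤ e ∧ e ≤ hi := by
  simp only [descFromTo, List.mem_map, List.mem_range]
  constructor
  · rintro ⟨j, hj, rfl⟩; omega
  · intro h; exact ⟨hi - e, by omega, by omega⟩

lemma asc_len {lo hi : ℕ} : (ascFromTo lo hi).length = hi + 1 - lo := by
  simp [ascFromTo]

lemma desc_len {lo hi : ℕ} : (descFromTo hi lo).length = hi + 1 - lo := by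
  simp [descFromTo]

lemma asc_cons {lo hi : ℕ} (h : lo ≤ hi) :
    ascFromTo lo hi = lo :: ascFromTo (lo + 1) hi := by
  unfold ascFromTo
  rw [show hi + 1 - lo = (hi + 1 - (lo + 1)) + 1 from by omega,
    List.range_succ_eq_map, List.map_cons, List.map_map]
  refine congrArg₂ _ (by omega) (List.map_congr_left fun a _ => ?_)
  simp [Function.comp]; omega

lemma desc_cons {lo hi : ℕ} (h0 : 1 ≤ lo) (h : lo ≤ hi) :
    descFromTo hi lo = hi :: descFromTo (hi - 1) lo := by
  unfold descFromTo
  rw [show hi + 1 - lo = ((hi - 1) + 1 - lo) + 1 from by omega,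
    List.range_succ_eq_map, List.map_cons, List.map_map]
  refine congrArg₂ _ (by omega) (List.map_congr_left fun a _ => ?_)
  simp [Function.comp]; omega

lemma asc_idx_aux : ∀ fuel lo hi e : ℕ, hi + 1 - lo ≤ fuel → lo ≤ e → e ≤ hi →
    (ascFromTo lo hi).idxOf e = e - lo := by
  intro fuel
  induction fuel with
  | zero => intro lo hi e h1 h2 h3; omega
  | succ f ih =>
    intro lo hi e h1 h2 h3
    rw [asc_cons (by omega)]
    by_cases he : e = lo
    · rw [he, List.idxOf_cons_self]; omega
    · rw [List.idxOf_cons_ne _ (by omega : lo ≠ e),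
        ih (lo + 1) hi e (by omega) (by omega) h3]
      omega

lemma asc_idx {lo hi e : ℕ} (h2 : lo ≤ e) (h3 : e ≤ hi) :
    (ascFromTo lo hi).idxOf e = e - lo :=
  asc_idx_aux (hi + 1 - lo) lo hi e le_rfl h2 h3

lemma desc_idx_aux : ∀ fuel hi lo e : ℕ, hi + 1 - lo ≤ fuel → 1 ≤ lo → lo ≤ e → e ≤ hi →
    (descFromTo hi lo).idxOf e = hi - e := by
  intro fuel
  induction fuel with
  | zero => intro hi lo e h1 h0 h2 h3; omega
  | succ f ih =>
    intro hi lo e h1 h0 h2 h3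
    rw [desc_cons h0 (by omega)]
    by_cases he : e = hi
    · rw [he, List.idxOf_cons_self]; omega
    · rw [List.idxOf_cons_ne _ (by omega : hi ≠ e),
        ih (hi - 1) lo e (by omega) h0 h2 (by omega)]
      omega

lemma desc_idx {lo hi e : ℕ} (h0 : 1 ≤ lo) (h2 : lo ≤ e) (h3 : e ≤ hi) :
    (descFromTo hi lo).idxOf e = hi - e :=
  desc_idx_aux (hi + 1 - lo) hi lo e le_rfl h0 h2 h3

lemma asc_nil {lo hi : ℕ} (h : hi + 1 ≤ lo) : ascFromTo lo hi = [] := by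
  unfold ascFromTo
  rw [show hi + 1 - lo = 0 from by omega]
  rfl

lemma asc_split_aux : ∀ fuel lo mid hi : ℕ, mid + 1 - lo ≤ fuel → lo ≤ mid + 1 → mid ≤ hi →
    ascFromTo lo hi = ascFromTo lo mid ++ ascFromTo (mid + 1) hi := by
  intro fuel
  induction fuel with
  | zero =>
    intro lo mid hi h1 h2 h3
    rw [asc_nil (by omega : mid + 1 ≤ lo), List.nil_append,
      show lo = mid + 1 from by omega]
  | succ f ih =>
    intro lo mid hi h1 h2 h3
    by_cases hlm : lo ≤ mid
    · rw [asc_cons (by omega : lo ≤ hi), asc_cons hlm, List.cons_append,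
        ih (lo + 1) mid hi (by omega) (by omega) h3]
    · rw [asc_nil (by omega : mid + 1 ≤ lo), List.nil_append,
        show lo = mid + 1 from by omega]

lemma asc_split {lo mid hi : ℕ} (h2 : lo ≤ mid + 1) (h3 : mid ≤ hi) :
    ascFromTo lo hi = ascFromTo lo mid ++ ascFromTo (mid + 1) hi :=
  asc_split_aux (mid + 1 - lo) lo mid hi le_rfl h2 h3

lemma desc_eq_rev {lo hi : ℕ} : descFromTo hi lo = (ascFromTo lo hi).reverse := by
  apply List.ext_getElem
  · simp [ascFromTo, descFromTo]
  · intro j h1 h2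
    simp only [descFromTo, ascFromTo, List.getElem_reverse, List.getElem_map,
      List.getElem_range, List.length_map, List.length_range]
    simp only [descFromTo, List.length_map, List.length_range] at h1
    omega

lemma range_map_eq {n : ℕ} : (List.range n).map (· + 1) = ascFromTo 1 n := by
  unfold ascFromTo
  rw [show n + 1 - 1 = n from by omega]
  exact List.map_congr_left fun a _ => by omega

lemma base_oneLine {n k i : ℕ} (hi : 1 ≤ i) (hik : i < k) (hkn : k ≤ n) :
    IsOneLine n (descFromTo (k - 1) (i + 1) ++ ascFromTo 1 i ++ ascFromTo k n) := by
  unfold IsOneLine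
  rw [range_map_eq,
    asc_split (by omega : (1:ℕ) ≤ i + 1) (by omega : i ≤ n),
    asc_split (by omega : i + 1 ≤ (k - 1) + 1) (by omega : k - 1 ≤ n),
    show k - 1 + 1 = k from by omega, desc_eq_rev]
  have p1 : ((ascFromTo (i+1) (k-1)).reverse ++ ascFromTo 1 i).Perm
      (ascFromTo 1 i ++ ascFromTo (i+1) (k-1)) :=
    ((ascFromTo (i+1) (k-1)).reverse_perm.append_right _).trans List.perm_append_comm
  simpa [List.append_assoc] using p1.append_right (ascFromTo k n)

end Blocks

def Kinv (n k i : ℕ) (w : List ℕ) : Prop :=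
  IsOneLine n w ∧
  (∀ d d', i ≤ d' → d' < d → d + 1 ≤ k → Pre w d d') ∧
  (∀ l l', 1 ≤ l → l < l' → l' + 1 ≤ i → Pre w l l') ∧
  (∀ h h', k ≤ h → h < h' → h' ≤ n → Pre w h h') ∧
  ∃ m, i ≤ m ∧ m + 1 ≤ k ∧ (∀ l, 1 ≤ l → l + 1 ≤ i → Pre w l m) ∧
    (∀ h, k ≤ h → h ≤ n → Pre w m h)

section Base

variable {n k i : ℕ}

lemma base_idx_A (hi : 1 ≤ i) (hik : i < k) {e : ℕ} (h1 : 1 ≤ e) (h2 : e ≤ i) :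
    (descFromTo (k - 1) (i + 1) ++ ascFromTo 1 i ++ ascFromTo k n).idxOf e
      = (k - 1 - i) + (e - 1) := by
  rw [List.append_assoc,
    List.idxOf_append_of_notMem (by rw [mem_desc_s11]; omega),
    List.idxOf_append_of_mem (by rw [mem_asc_s11]; omega),
    asc_idx h1 h2, desc_len]
  omega

lemma base_idx_D (hi : 1 ≤ i) (hik : i < k) {e : ℕ} (h1 : i + 1 ≤ e) (h2 : e ≤ k - 1) :
    (descFromTo (k - 1) (i + 1) ++ ascFromTo 1 i ++ ascFromTo k n).idxOf e
      = (k - 1) - e := by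
  rw [List.append_assoc,
    List.idxOf_append_of_mem (by rw [mem_desc_s11]; omega),
    desc_idx (by omega) h1 h2]

lemma base_idx_H (hi : 1 ≤ i) (hik : i < k) {e : ℕ} (h1 : k ≤ e) (h2 : e ≤ n) :
    (descFromTo (k - 1) (i + 1) ++ ascFromTo 1 i ++ ascFromTo k n).idxOf e
      = (k - 1 - i) + i + (e - k) := by
  rw [List.append_assoc,
    List.idxOf_append_of_notMem (by rw [mem_desc_s11]; omega),
    List.idxOf_append_of_notMem (by rw [mem_asc_s11]; omega),
    asc_idx h1 h2, desc_len, asc_len]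
  omega

lemma kinv_base (hi : 1 ≤ i) (hik : i < k) (hkn : k ≤ n) :
    Kinv n k i (descFromTo (k - 1) (i + 1) ++ ascFromTo 1 i ++ ascFromTo k n) := by
  have hOL := base_oneLine (n := n) hi hik hkn
  have hmem := mem_oneLine hOL
  refine ⟨hOL, ?_, ?_, ?_, i, le_rfl, by omega, ?_, ?_⟩
  · intro d d' h1 h2 h3
    refine ⟨(hmem d).mpr (by omega), (hmem d').mpr (by omega), ?_⟩
    rw [base_idx_D hi hik (by omega) (by omega)]
    by_cases hd' : d' = i
    · rw [hd', base_idx_A hi hik (by omega) (by omega)]; omega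
    · rw [base_idx_D hi hik (by omega) (by omega)]; omega
  · intro l l' h1 h2 h3
    refine ⟨(hmem l).mpr (by omega), (hmem l').mpr (by omega), ?_⟩
    rw [base_idx_A hi hik (by omega) (by omega),
      base_idx_A hi hik (by omega) (by omega)]
    omega
  · intro h h' h1 h2 h3
    refine ⟨(hmem h).mpr (by omega), (hmem h').mpr (by omega), ?_⟩
    rw [base_idx_H hi hik (by omega) (by omega),
      base_idx_H hi hik (by omega) (by omega)]
    omega
  · intro l h1 h2
    refine ⟨(hmem l).mpr (by omega), (hmem i).mpr (by omega), ?_⟩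
    rw [base_idx_A hi hik (by omega) (by omega),
      base_idx_A hi hik (by omega) (by omega)]
    omega
  · intro h h1 h2
    refine ⟨(hmem i).mpr (by omega), (hmem h).mpr (by omega), ?_⟩
    rw [base_idx_A hi hik (by omega) (by omega),
      base_idx_H hi hik (by omega) (by omega)]
    omega

end Base

section Avoid

variable {n k i : ℕ} {w : List ℕ}

lemma kinv_avoid (hi : 1 ≤ i) (hik : i < k) (hkn : k ≤ n) (hK : Kinv n k i w) :
    ¬ Contains3412 w ∧ ¬ Contains4231 w := by
  obtain ⟨hOL, hD, hLo, hH, m, hmi, hmk, hLm, hmH⟩ := hK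
  have hnd := oneLine_nodup hOL
  have hmem := mem_oneLine hOL
  constructor
  · rintro ⟨a, b, c, d, hcd, hda, hab, hsub⟩
    have t1 : ([a, b] : List ℕ).Sublist [a, b, c, d] :=
      .cons₂ _ (.cons₂ _ (List.nil_sublist _))
    have t2 : ([b, c] : List ℕ).Sublist [a, b, c, d] :=
      .cons _ (.cons₂ _ (.cons₂ _ (List.nil_sublist _)))
    have t3 : ([c, d] : List ℕ).Sublist [a, b, c, d] :=
      .cons _ (.cons _ (.cons₂ _ (.cons₂ _ (List.nil_sublist _))))
    have Pab := pre_of_sublist hnd (t1.trans hsub)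
    have Pbc := pre_of_sublist hnd (t2.trans hsub)
    have Pcd := pre_of_sublist hnd (t3.trans hsub)
    have hba : 1 ≤ a ∧ a ≤ n := (hmem a).mp Pab.1
    have hbb : 1 ≤ b ∧ b ≤ n := (hmem b).mp Pab.2.1
    have hbc : 1 ≤ c ∧ c ≤ n := (hmem c).mp Pbc.2.1
    have hbd : 1 ≤ d ∧ d ≤ n := (hmem d).mp Pcd.2.1
    by_cases hA1 : a + 1 ≤ i
    · exact (hLo c a (by omega) (by omega) (by omega)).asymm (Pab.trans Pbc)
    by_cases hA2 : a + 1 ≤ k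
    · -- a ∈ D
      by_cases hB : b + 1 ≤ k
      · exact (hD b a (by omega) (by omega) (by omega)).asymm Pab
      · -- b ∈ H
        by_cases hC1 : c + 1 ≤ i
        · exact ((hLm c (by omega) (by omega)).trans
            (hmH b (by omega) (by omega))).asymm Pbc
        · -- c ∈ D, so d ∈ D
          exact (hD d c (by omega) (by omega) (by omega)).asymm Pcd
    · -- a ∈ H, b ∈ H
      by_cases hC1 : c + 1 ≤ i
      · exact ((hLm c (by omega) (by omega)).trans
          (hmH b (by omega) (by omega))).asymm Pbc
      by_cases hC2 : c + 1 ≤ k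
      · -- c ∈ D
        by_cases hD1 : d + 1 ≤ k
        · exact (hD d c (by omega) (by omega) (by omega)).asymm Pcd
        · exact (hH d a (by omega) (by omega) (by omega)).asymm
            (Pab.trans (Pbc.trans Pcd))
      · exact (hH c b (by omega) (by omega) (by omega)).asymm Pbc
  · rintro ⟨a, b, c, d, hdb, hbc, hca, hsub⟩
    have t1 : ([a, b] : List ℕ).Sublist [a, b, c, d] :=
      .cons₂ _ (.cons₂ _ (List.nil_sublist _))
    have t2 : ([b, c] : List ℕ).Sublist [a, b, c, d] :=
      .cons _ (.cons₂ _ (.cons₂ _ (List.nil_sublist _)))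
    have t3 : ([c, d] : List ℕ).Sublist [a, b, c, d] :=
      .cons _ (.cons _ (.cons₂ _ (.cons₂ _ (List.nil_sublist _))))
    have Pab := pre_of_sublist hnd (t1.trans hsub)
    have Pbc := pre_of_sublist hnd (t2.trans hsub)
    have Pcd := pre_of_sublist hnd (t3.trans hsub)
    have hba : 1 ≤ a ∧ a ≤ n := (hmem a).mp Pab.1
    have hbb : 1 ≤ b ∧ b ≤ n := (hmem b).mp Pab.2.1
    have hbc' : 1 ≤ c ∧ c ≤ n := (hmem c).mp Pbc.2.1
    have hbd : 1 ≤ d ∧ d ≤ n := (hmem d).mp Pcd.2.1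
    by_cases hA1 : a + 1 ≤ i
    · exact (hLo b a (by omega) (by omega) (by omega)).asymm Pab
    by_cases hA2 : a + 1 ≤ k
    · -- a ∈ D
      by_cases hC1 : c + 1 ≤ i
      · exact (hLo d c (by omega) (by omega) (by omega)).asymm Pcd
      · -- c ∈ D
        by_cases hB1 : b + 1 ≤ i
        · exact (hLo d b (by omega) (by omega) (by omega)).asymm (Pbc.trans Pcd)
        · exact (hD c b (by omega) (by omega) (by omega)).asymm Pbc
    · -- a ∈ H
      by_cases hC2 : k ≤ c
      · exact (hH c a (by omega) (by omega) (by omega)).asymm (Pab.trans Pbc)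
      by_cases hC1 : c + 1 ≤ i
      · exact (hLo d b (by omega) (by omega) (by omega)).asymm (Pbc.trans Pcd)
      · -- c ∈ D
        by_cases hB1 : b + 1 ≤ i
        · exact (hLo d b (by omega) (by omega) (by omega)).asymm (Pbc.trans Pcd)
        · exact (hD c b (by omega) (by omega) (by omega)).asymm Pbc

end Avoid

section SwapHelpers

variable {A B : List ℕ} {s t e : ℕ}

lemma mem_W_left (he : e ∈ A) : e ∈ A ++ s :: t :: B := by simp [he]
lemma mem_W_s : s ∈ A ++ s :: t :: B := by simp
lemma mem_W_t : t ∈ A ++ s :: t :: B := by simp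
lemma mem_W_right (he : e ∈ B) : e ∈ A ++ s :: t :: B := by simp [he]

lemma pre_left (hnd : (A ++ s :: t :: B).Nodup) (he : e ∈ A) :
    Pre (A ++ s :: t :: B) e s ∧ Pre (A ++ s :: t :: B) e t := by
  obtain ⟨hs1, ht1, -, -⟩ := swap_idx hnd
  have hidx : (A ++ s :: t :: B).idxOf e = A.idxOf e :=
    List.idxOf_append_of_mem he
  have hlt : A.idxOf e < A.length := List.idxOf_lt_length_iff.mpr he
  exact ⟨⟨mem_W_left he, mem_W_s, by omega⟩, ⟨mem_W_left he, mem_W_t, by omega⟩⟩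

lemma pre_mid (hnd : (A ++ s :: t :: B).Nodup) : Pre (A ++ s :: t :: B) s t := by
  obtain ⟨hs1, ht1, -, -⟩ := swap_idx hnd
  exact ⟨mem_W_s, mem_W_t, by omega⟩

lemma idx_right (hnd : (A ++ s :: t :: B).Nodup) (he : e ∈ B) :
    (A ++ s :: t :: B).idxOf e = A.length + 2 + B.idxOf e := by
  rw [List.nodup_append] at hnd
  have heA : e ∉ A := fun h => hnd.2.2 _ h _ (by simp [he]) rfl
  have hes : s ≠ e := by
    rintro rfl; exact (List.nodup_cons.mp hnd.2.1).1 (by simp [he])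
  have het : t ≠ e := by
    rintro rfl
    exact (List.nodup_cons.mp (List.nodup_cons.mp hnd.2.1).2).1 he
  rw [List.idxOf_append_of_notMem heA, List.idxOf_cons_ne _ hes,
    List.idxOf_cons_ne _ het]
  omega

lemma pre_right (hnd : (A ++ s :: t :: B).Nodup) (he : e ∈ B) :
    Pre (A ++ s :: t :: B) s e ∧ Pre (A ++ s :: t :: B) t e := by
  obtain ⟨hs1, ht1, -, -⟩ := swap_idx hnd
  have hidx := idx_right hnd he
  exact ⟨⟨mem_W_s, mem_W_right he, by omega⟩, ⟨mem_W_t, mem_W_right he, by omega⟩⟩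

lemma idx_lastA {u : List ℕ} {y : ℕ}
    (hnd : ((u ++ [y]) ++ s :: t :: B).Nodup) :
    ((u ++ [y]) ++ s :: t :: B).idxOf y = u.length := by
  have hA : (u ++ [y]).Nodup := hnd.of_append_left
  rw [List.nodup_append] at hA
  have hyu : y ∉ u := fun h => hA.2.2 _ h _ (by simp) rfl
  rw [List.idxOf_append_of_mem (by simp : y ∈ u ++ [y]),
    List.idxOf_append_of_notMem hyu, List.idxOf_cons_self]
  omega

lemma idx_headB {v : List ℕ} {y : ℕ}
    (hnd : (A ++ s :: t :: y :: v).Nodup) :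
    (A ++ s :: t :: y :: v).idxOf y = A.length + 2 := by
  have := idx_right (B := y :: v) hnd (by simp : y ∈ y :: v)
  simpa using this

end SwapHelpers

section Steps

variable {n k i : ℕ} {u v : List ℕ} {x y z : ℕ}

lemma kinv_step1 (hi : 1 ≤ i) (hik : i < k) (hkn : k ≤ n) (hxy : x < y) (hyz : y < z)
    (hK : Kinv n k i ((u ++ [y]) ++ x :: z :: v)) :
    Kinv n k i ((u ++ [y]) ++ z :: x :: v) := by
  obtain ⟨hOL, hD, hLo, hH, m, hmi, hmk, hLm, hmH⟩ := hK
  have hnd : ((u ++ [y]) ++ x :: z :: v).Nodup := oneLine_nodup hOL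
  have hmem := mem_oneLine hOL
  have hbx : 1 ≤ x ∧ x ≤ n := (hmem x).mp mem_W_s
  have hbz : 1 ≤ z ∧ z ≤ n := (hmem z).mp mem_W_t
  have hby : 1 ≤ y ∧ y ≤ n := (hmem y).mp (mem_W_left (by simp))
  have hPyx : Pre ((u ++ [y]) ++ x :: z :: v) y x := (pre_left hnd (by simp)).1
  have hPyz : Pre ((u ++ [y]) ++ x :: z :: v) y z := (pre_left hnd (by simp)).2
  have hPxz : Pre ((u ++ [y]) ++ x :: z :: v) x z := pre_mid hnd
  have hOL' : IsOneLine n ((u ++ [y]) ++ z :: x :: v) := swap_perm.symm.trans hOL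
  by_cases hxLo : x + 1 ≤ i
  · by_cases hzLo : z + 1 ≤ i
    · -- x, z ∈ Lo, hence y ∈ Lo
      exact ((hLo x y (by omega) (by omega) (by omega)).asymm hPyx).elim
    by_cases hzD : z + 1 ≤ k
    · -- x ∈ Lo, z ∈ D
      rcases lt_trichotomy z m with hzm | hzm | hzm
      · exact (swap_between hnd (by omega : m ≠ x) (by omega : m ≠ z)
          (hLm x (by omega) hxLo) (hD m z (by omega) hzm hmk)).elim
      · -- z = m
        by_cases hyLo : y + 1 ≤ i
        · exact ((hLo x y (by omega) hxy hyLo).asymm hPyx).elim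
        · exact ((hD z y (by omega) hyz (by omega)).asymm hPyz).elim
      · -- z > m : survive with m
        refine ⟨hOL', ?_, ?_, ?_, m, hmi, hmk, ?_, ?_⟩
        · intro d d' h1 h2 h3
          exact (swap_pre hnd (by rintro ⟨rfl, rfl⟩; omega)
            (by rintro ⟨rfl, rfl⟩; omega)).mp (hD d d' h1 h2 h3)
        · intro l l' h1 h2 h3
          exact (swap_pre hnd (by rintro ⟨rfl, rfl⟩; omega)
            (by rintro ⟨rfl, rfl⟩; omega)).mp (hLo l l' h1 h2 h3)
        · intro h h' h1 h2 h3
          exact (swap_pre hnd (by rintro ⟨rfl, rfl⟩; omega)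
            (by rintro ⟨rfl, rfl⟩; omega)).mp (hH h h' h1 h2 h3)
        · intro l h1 h2
          exact (swap_pre hnd (by rintro ⟨rfl, rfl⟩; omega)
            (by rintro ⟨rfl, rfl⟩; omega)).mp (hLm l h1 h2)
        · intro h h1 h2
          exact (swap_pre hnd (by rintro ⟨rfl, rfl⟩; omega)
            (by rintro ⟨rfl, rfl⟩; omega)).mp (hmH h h1 h2)
    · -- x ∈ Lo, z ∈ H
      exact (swap_between hnd (by omega : m ≠ x) (by omega : m ≠ z)
        (hLm x (by omega) hxLo) (hmH z (by omega) (by omega))).elim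
  by_cases hxD : x + 1 ≤ k
  · -- x ∈ D
    by_cases hzD : z + 1 ≤ k
    · -- x, z ∈ D
      exact ((hD z x (by omega) (by omega) (by omega)).asymm hPxz).elim
    · -- x ∈ D, z ∈ H
      rcases lt_trichotomy x m with hxm | hxm | hxm
      · -- x < m : survive with m
        refine ⟨hOL', ?_, ?_, ?_, m, hmi, hmk, ?_, ?_⟩
        · intro d d' h1 h2 h3
          exact (swap_pre hnd (by rintro ⟨rfl, rfl⟩; omega)
            (by rintro ⟨rfl, rfl⟩; omega)).mp (hD d d' h1 h2 h3)
        · intro l l' h1 h2 h3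
          exact (swap_pre hnd (by rintro ⟨rfl, rfl⟩; omega)
            (by rintro ⟨rfl, rfl⟩; omega)).mp (hLo l l' h1 h2 h3)
        · intro h h' h1 h2 h3
          exact (swap_pre hnd (by rintro ⟨rfl, rfl⟩; omega)
            (by rintro ⟨rfl, rfl⟩; omega)).mp (hH h h' h1 h2 h3)
        · intro l h1 h2
          exact (swap_pre hnd (by rintro ⟨rfl, rfl⟩; omega)
            (by rintro ⟨rfl, rfl⟩; omega)).mp (hLm l h1 h2)
        · intro h h1 h2
          exact (swap_pre hnd (by rintro ⟨rfl, rfl⟩; omega)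
            (by rintro ⟨rfl, rfl⟩; omega)).mp (hmH h h1 h2)
      · -- x = m
        subst hxm
        by_cases hyD : y + 1 ≤ k
        · -- y ∈ D : survive with m' = y
          have hidxy : ((u ++ [y]) ++ x :: z :: v).idxOf y = u.length :=
            idx_lastA hnd
          have hidxx : ((u ++ [y]) ++ x :: z :: v).idxOf x = (u ++ [y]).length :=
            (swap_idx hnd).1
          have hlenA : (u ++ [y]).length = u.length + 1 := by simp
          refine ⟨hOL', ?_, ?_, ?_, y, by omega, by omega, ?_, ?_⟩
          · intro d d' h1 h2 h3
            exact (swap_pre hnd (by rintro ⟨rfl, rfl⟩; omega)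
              (by rintro ⟨rfl, rfl⟩; omega)).mp (hD d d' h1 h2 h3)
          · intro l l' h1 h2 h3
            exact (swap_pre hnd (by rintro ⟨rfl, rfl⟩; omega)
              (by rintro ⟨rfl, rfl⟩; omega)).mp (hLo l l' h1 h2 h3)
          · intro h h' h1 h2 h3
            exact (swap_pre hnd (by rintro ⟨rfl, rfl⟩; omega)
              (by rintro ⟨rfl, rfl⟩; omega)).mp (hH h h' h1 h2 h3)
          · intro l h1 h2
            have hPlx := hLm l h1 h2
            have hne : ((u ++ [y]) ++ x :: z :: v).idxOf l
                ≠ ((u ++ [y]) ++ x :: z :: v).idxOf y := fun h =>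
              (by omega : l ≠ y)
                ((List.idxOf_inj hPlx.1).mp h)
            have hPly : Pre ((u ++ [y]) ++ x :: z :: v) l y :=
              ⟨hPlx.1, mem_W_left (by simp), by have := hPlx.2.2; omega⟩
            exact (swap_pre hnd (by rintro ⟨rfl, rfl⟩; omega)
              (by rintro ⟨rfl, rfl⟩; omega)).mp hPly
          · intro h h1 h2
            by_cases hhz : h = z
            · subst hhz
              exact (pre_left (swap_nodup hnd) (by simp : y ∈ u ++ [y])).1
            · have hPxh := hmH h h1 h2
              have hdi := swap_idx_other hnd hPxh.2.1 (by omega : h ≠ x) hhz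
              have hPyh : Pre ((u ++ [y]) ++ x :: z :: v) y h :=
                ⟨mem_W_left (by simp), hPxh.2.1, by have := hPxh.2.2; omega⟩
              exact (swap_pre hnd (by rintro ⟨rfl, rfl⟩; omega)
                (by rintro ⟨rfl, rfl⟩; omega)).mp hPyh
        · -- y ∈ H
          exact ((hmH y (by omega) (by omega)).asymm hPyx).elim
      · -- x > m
        exact (swap_between hnd (by omega : m ≠ x) (by omega : m ≠ z)
          (hD x m hmi hxm hxD) (hmH z (by omega) (by omega))).elim
  · -- x, z ∈ H
    exact ((hH x y (by omega) hxy (by omega)).asymm hPyx).elim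


lemma kinv_step2 (hi : 1 ≤ i) (hik : i < k) (hkn : k ≤ n) (hxy : x < y) (hyz : y < z)
    (hK : Kinv n k i ((u ++ [y]) ++ z :: x :: v)) :
    Kinv n k i ((u ++ [y]) ++ x :: z :: v) := by
  obtain ⟨hOL, hD, hLo, hH, m, hmi, hmk, hLm, hmH⟩ := hK
  have hnd : ((u ++ [y]) ++ z :: x :: v).Nodup := oneLine_nodup hOL
  have hmem := mem_oneLine hOL
  have hbx : 1 ≤ x ∧ x ≤ n := (hmem x).mp mem_W_t
  have hbz : 1 ≤ z ∧ z ≤ n := (hmem z).mp mem_W_s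
  have hby : 1 ≤ y ∧ y ≤ n := (hmem y).mp (mem_W_left (by simp))
  have hPyz : Pre ((u ++ [y]) ++ z :: x :: v) y z := (pre_left hnd (by simp)).1
  have hPyx : Pre ((u ++ [y]) ++ z :: x :: v) y x := (pre_left hnd (by simp)).2
  have hPzx : Pre ((u ++ [y]) ++ z :: x :: v) z x := pre_mid hnd
  have hOL' : IsOneLine n ((u ++ [y]) ++ x :: z :: v) := swap_perm.symm.trans hOL
  by_cases hxLo : x + 1 ≤ i
  · by_cases hzLo : z + 1 ≤ i
    · exact ((hLo x z (by omega) (by omega) (by omega)).asymm hPzx).elim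
    by_cases hzD : z + 1 ≤ k
    · -- x ∈ Lo, z ∈ D
      rcases lt_trichotomy z m with hzm | hzm | hzm
      · exact (((hLm x (by omega) hxLo).trans
          (hD m z (by omega) hzm hmk)).asymm hPzx).elim
      · subst hzm
        exact ((hLm x (by omega) hxLo).asymm hPzx).elim
      · -- z > m : survive with m
        refine ⟨hOL', ?_, ?_, ?_, m, hmi, hmk, ?_, ?_⟩
        · intro d d' h1 h2 h3
          exact (swap_pre hnd (by rintro ⟨rfl, rfl⟩; omega)
            (by rintro ⟨rfl, rfl⟩; omega)).mp (hD d d' h1 h2 h3)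
        · intro l l' h1 h2 h3
          exact (swap_pre hnd (by rintro ⟨rfl, rfl⟩; omega)
            (by rintro ⟨rfl, rfl⟩; omega)).mp (hLo l l' h1 h2 h3)
        · intro h h' h1 h2 h3
          exact (swap_pre hnd (by rintro ⟨rfl, rfl⟩; omega)
            (by rintro ⟨rfl, rfl⟩; omega)).mp (hH h h' h1 h2 h3)
        · intro l h1 h2
          exact (swap_pre hnd (by rintro ⟨rfl, rfl⟩; omega)
            (by rintro ⟨rfl, rfl⟩; omega)).mp (hLm l h1 h2)
        · intro h h1 h2
          exact (swap_pre hnd (by rintro ⟨rfl, rfl⟩; omega)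
            (by rintro ⟨rfl, rfl⟩; omega)).mp (hmH h h1 h2)
    · -- x ∈ Lo, z ∈ H
      exact (((hLm x (by omega) hxLo).trans
        (hmH z (by omega) (by omega))).asymm hPzx).elim
  by_cases hxD : x + 1 ≤ k
  · by_cases hzD : z + 1 ≤ k
    · -- x, z ∈ D, hence y ∈ D
      exact ((hD z y (by omega) hyz (by omega)).asymm hPyz).elim
    · -- x ∈ D, z ∈ H
      rcases lt_trichotomy x m with hxm | hxm | hxm
      · -- x < m : survive with m
        refine ⟨hOL', ?_, ?_, ?_, m, hmi, hmk, ?_, ?_⟩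
        · intro d d' h1 h2 h3
          exact (swap_pre hnd (by rintro ⟨rfl, rfl⟩; omega)
            (by rintro ⟨rfl, rfl⟩; omega)).mp (hD d d' h1 h2 h3)
        · intro l l' h1 h2 h3
          exact (swap_pre hnd (by rintro ⟨rfl, rfl⟩; omega)
            (by rintro ⟨rfl, rfl⟩; omega)).mp (hLo l l' h1 h2 h3)
        · intro h h' h1 h2 h3
          exact (swap_pre hnd (by rintro ⟨rfl, rfl⟩; omega)
            (by rintro ⟨rfl, rfl⟩; omega)).mp (hH h h' h1 h2 h3)
        · intro l h1 h2
          exact (swap_pre hnd (by rintro ⟨rfl, rfl⟩; omega)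
            (by rintro ⟨rfl, rfl⟩; omega)).mp (hLm l h1 h2)
        · intro h h1 h2
          exact (swap_pre hnd (by rintro ⟨rfl, rfl⟩; omega)
            (by rintro ⟨rfl, rfl⟩; omega)).mp (hmH h h1 h2)
      · subst hxm
        exact ((hmH z (by omega) (by omega)).asymm hPzx).elim
      · exact (((hD x m hmi hxm hxD).trans
          (hmH z (by omega) (by omega))).asymm hPzx).elim
  · -- x, z ∈ H
    exact ((hH x z (by omega) (by omega) (by omega)).asymm hPzx).elim

lemma kinv_step3 (hi : 1 ≤ i) (hik : i < k) (hkn : k ≤ n) (hxy : x < y) (hyz : y < z)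
    (hK : Kinv n k i (u ++ x :: z :: y :: v)) :
    Kinv n k i (u ++ z :: x :: y :: v) := by
  obtain ⟨hOL, hD, hLo, hH, m, hmi, hmk, hLm, hmH⟩ := hK
  have hnd : (u ++ x :: z :: y :: v).Nodup := oneLine_nodup hOL
  have hmem := mem_oneLine hOL
  have hbx : 1 ≤ x ∧ x ≤ n := (hmem x).mp mem_W_s
  have hbz : 1 ≤ z ∧ z ≤ n := (hmem z).mp mem_W_t
  have hby : 1 ≤ y ∧ y ≤ n := (hmem y).mp (mem_W_right (by simp))
  have hPxz : Pre (u ++ x :: z :: y :: v) x z := pre_mid hnd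
  have hPxy : Pre (u ++ x :: z :: y :: v) x y := (pre_right hnd (by simp)).1
  have hPzy : Pre (u ++ x :: z :: y :: v) z y := (pre_right hnd (by simp)).2
  have hOL' : IsOneLine n (u ++ z :: x :: y :: v) := swap_perm.symm.trans hOL
  by_cases hxLo : x + 1 ≤ i
  · by_cases hzLo : z + 1 ≤ i
    · -- x, z ∈ Lo, hence y ∈ Lo
      exact ((hLo y z (by omega) hyz hzLo).asymm hPzy).elim
    by_cases hzD : z + 1 ≤ k
    · -- x ∈ Lo, z ∈ D
      rcases lt_trichotomy z m with hzm | hzm | hzm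
      · exact (swap_between hnd (by omega : m ≠ x) (by omega : m ≠ z)
          (hLm x (by omega) hxLo) (hD m z (by omega) hzm hmk)).elim
      · -- z = m
        subst hzm
        by_cases hyD : i ≤ y
        · -- y ∈ D : survive with m' = y
          have hidxy : (u ++ x :: z :: y :: v).idxOf y = u.length + 2 :=
            idx_headB hnd
          have hidxz : (u ++ x :: z :: y :: v).idxOf z = u.length + 1 := by
            have := (swap_idx hnd).2.1; simpa using this
          have hidxy' : (u ++ z :: x :: y :: v).idxOf y = u.length + 2 :=
            idx_headB (swap_nodup hnd)
          have hidxx' : (u ++ z :: x :: y :: v).idxOf x = u.length + 1 := by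
            have := (swap_idx hnd).2.2.2; simpa using this
          refine ⟨hOL', ?_, ?_, ?_, y, hyD, by omega, ?_, ?_⟩
          · intro d d' h1 h2 h3
            exact (swap_pre hnd (by rintro ⟨rfl, rfl⟩; omega)
              (by rintro ⟨rfl, rfl⟩; omega)).mp (hD d d' h1 h2 h3)
          · intro l l' h1 h2 h3
            exact (swap_pre hnd (by rintro ⟨rfl, rfl⟩; omega)
              (by rintro ⟨rfl, rfl⟩; omega)).mp (hLo l l' h1 h2 h3)
          · intro h h' h1 h2 h3
            exact (swap_pre hnd (by rintro ⟨rfl, rfl⟩; omega)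
              (by rintro ⟨rfl, rfl⟩; omega)).mp (hH h h' h1 h2 h3)
          · intro l h1 h2
            by_cases hlx : l = x
            · subst hlx
              exact ⟨by simp, by simp, by omega⟩
            · have hPlz := hLm l h1 h2
              have hidxxW : (u ++ x :: z :: y :: v).idxOf x = u.length := by
                have := (swap_idx hnd).1; simpa using this
              have hne : (u ++ x :: z :: y :: v).idxOf l
                  ≠ (u ++ x :: z :: y :: v).idxOf x := fun h =>
                hlx ((List.idxOf_inj hPlz.1).mp h)
              have hPly : Pre (u ++ x :: z :: y :: v) l y :=
                ⟨hPlz.1, mem_W_right (by simp), by have := hPlz.2.2; omega⟩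
              exact (swap_pre hnd (by rintro ⟨rfl, rfl⟩; omega)
                (by rintro ⟨rfl, rfl⟩; omega)).mp hPly
          · intro h h1 h2
            have hPzh := hmH h h1 h2
            have hdi := swap_idx_other hnd hPzh.2.1 (by omega : h ≠ x)
              (by omega : h ≠ z)
            have hne : (u ++ x :: z :: y :: v).idxOf h
                ≠ (u ++ x :: z :: y :: v).idxOf y := fun hh =>
              (by omega : h ≠ y) ((List.idxOf_inj hPzh.2.1).mp hh)
            have hPyh : Pre (u ++ x :: z :: y :: v) y h :=
              ⟨mem_W_right (by simp), hPzh.2.1, by have := hPzh.2.2; omega⟩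
            exact (swap_pre hnd (by rintro ⟨rfl, rfl⟩; omega)
              (by rintro ⟨rfl, rfl⟩; omega)).mp hPyh
        · -- y ∈ Lo
          exact ((hLm y (by omega) (by omega)).asymm hPzy).elim
      · -- z > m : survive with m
        refine ⟨hOL', ?_, ?_, ?_, m, hmi, hmk, ?_, ?_⟩
        · intro d d' h1 h2 h3
          exact (swap_pre hnd (by rintro ⟨rfl, rfl⟩; omega)
            (by rintro ⟨rfl, rfl⟩; omega)).mp (hD d d' h1 h2 h3)
        · intro l l' h1 h2 h3
          exact (swap_pre hnd (by rintro ⟨rfl, rfl⟩; omega)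
            (by rintro ⟨rfl, rfl⟩; omega)).mp (hLo l l' h1 h2 h3)
        · intro h h' h1 h2 h3
          exact (swap_pre hnd (by rintro ⟨rfl, rfl⟩; omega)
            (by rintro ⟨rfl, rfl⟩; omega)).mp (hH h h' h1 h2 h3)
        · intro l h1 h2
          exact (swap_pre hnd (by rintro ⟨rfl, rfl⟩; omega)
            (by rintro ⟨rfl, rfl⟩; omega)).mp (hLm l h1 h2)
        · intro h h1 h2
          exact (swap_pre hnd (by rintro ⟨rfl, rfl⟩; omega)
            (by rintro ⟨rfl, rfl⟩; omega)).mp (hmH h h1 h2)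
    · -- x ∈ Lo, z ∈ H
      exact (swap_between hnd (by omega : m ≠ x) (by omega : m ≠ z)
        (hLm x (by omega) hxLo) (hmH z (by omega) (by omega))).elim
  by_cases hxD : x + 1 ≤ k
  · by_cases hzD : z + 1 ≤ k
    · exact ((hD z x (by omega) (by omega) (by omega)).asymm hPxz).elim
    · -- x ∈ D, z ∈ H
      rcases lt_trichotomy x m with hxm | hxm | hxm
      · -- x < m : survive with m
        refine ⟨hOL', ?_, ?_, ?_, m, hmi, hmk, ?_, ?_⟩
        · intro d d' h1 h2 h3
          exact (swap_pre hnd (by rintro ⟨rfl, rfl⟩; omega)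
            (by rintro ⟨rfl, rfl⟩; omega)).mp (hD d d' h1 h2 h3)
        · intro l l' h1 h2 h3
          exact (swap_pre hnd (by rintro ⟨rfl, rfl⟩; omega)
            (by rintro ⟨rfl, rfl⟩; omega)).mp (hLo l l' h1 h2 h3)
        · intro h h' h1 h2 h3
          exact (swap_pre hnd (by rintro ⟨rfl, rfl⟩; omega)
            (by rintro ⟨rfl, rfl⟩; omega)).mp (hH h h' h1 h2 h3)
        · intro l h1 h2
          exact (swap_pre hnd (by rintro ⟨rfl, rfl⟩; omega)
            (by rintro ⟨rfl, rfl⟩; omega)).mp (hLm l h1 h2)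
        · intro h h1 h2
          exact (swap_pre hnd (by rintro ⟨rfl, rfl⟩; omega)
            (by rintro ⟨rfl, rfl⟩; omega)).mp (hmH h h1 h2)
      · -- x = m
        subst hxm
        by_cases hyD : y + 1 ≤ k
        · exact ((hD y x (by omega) hxy hyD).asymm hPxy).elim
        · exact ((hH y z (by omega) hyz (by omega)).asymm hPzy).elim
      · exact (swap_between hnd (by omega : m ≠ x) (by omega : m ≠ z)
          (hD x m hmi hxm hxD) (hmH z (by omega) (by omega))).elim
  · -- x, z ∈ H, hence y ∈ H
    exact ((hH y z (by omega) hyz (by omega)).asymm hPzy).elim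

lemma kinv_step4 (hi : 1 ≤ i) (hik : i < k) (hkn : k ≤ n) (hxy : x < y) (hyz : y < z)
    (hK : Kinv n k i (u ++ z :: x :: y :: v)) :
    Kinv n k i (u ++ x :: z :: y :: v) := by
  obtain ⟨hOL, hD, hLo, hH, m, hmi, hmk, hLm, hmH⟩ := hK
  have hnd : (u ++ z :: x :: y :: v).Nodup := oneLine_nodup hOL
  have hmem := mem_oneLine hOL
  have hbx : 1 ≤ x ∧ x ≤ n := (hmem x).mp mem_W_t
  have hbz : 1 ≤ z ∧ z ≤ n := (hmem z).mp mem_W_s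
  have hby : 1 ≤ y ∧ y ≤ n := (hmem y).mp (mem_W_right (by simp))
  have hPzx : Pre (u ++ z :: x :: y :: v) z x := pre_mid hnd
  have hPzy : Pre (u ++ z :: x :: y :: v) z y := (pre_right hnd (by simp)).1
  have hPxy : Pre (u ++ z :: x :: y :: v) x y := (pre_right hnd (by simp)).2
  have hOL' : IsOneLine n (u ++ x :: z :: y :: v) := swap_perm.symm.trans hOL
  by_cases hxLo : x + 1 ≤ i
  · by_cases hzLo : z + 1 ≤ i
    · exact ((hLo x z (by omega) (by omega) (by omega)).asymm hPzx).elim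
    by_cases hzD : z + 1 ≤ k
    · -- x ∈ Lo, z ∈ D
      rcases lt_trichotomy z m with hzm | hzm | hzm
      · exact (((hLm x (by omega) hxLo).trans
          (hD m z (by omega) hzm hmk)).asymm hPzx).elim
      · subst hzm
        exact ((hLm x (by omega) hxLo).asymm hPzx).elim
      · -- z > m : survive with m
        refine ⟨hOL', ?_, ?_, ?_, m, hmi, hmk, ?_, ?_⟩
        · intro d d' h1 h2 h3
          exact (swap_pre hnd (by rintro ⟨rfl, rfl⟩; omega)
            (by rintro ⟨rfl, rfl⟩; omega)).mp (hD d d' h1 h2 h3)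
        · intro l l' h1 h2 h3
          exact (swap_pre hnd (by rintro ⟨rfl, rfl⟩; omega)
            (by rintro ⟨rfl, rfl⟩; omega)).mp (hLo l l' h1 h2 h3)
        · intro h h' h1 h2 h3
          exact (swap_pre hnd (by rintro ⟨rfl, rfl⟩; omega)
            (by rintro ⟨rfl, rfl⟩; omega)).mp (hH h h' h1 h2 h3)
        · intro l h1 h2
          exact (swap_pre hnd (by rintro ⟨rfl, rfl⟩; omega)
            (by rintro ⟨rfl, rfl⟩; omega)).mp (hLm l h1 h2)
        · intro h h1 h2
          exact (swap_pre hnd (by rintro ⟨rfl, rfl⟩; omega)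
            (by rintro ⟨rfl, rfl⟩; omega)).mp (hmH h h1 h2)
    · -- x ∈ Lo, z ∈ H
      exact (((hLm x (by omega) hxLo).trans
        (hmH z (by omega) (by omega))).asymm hPzx).elim
  by_cases hxD : x + 1 ≤ k
  · by_cases hzD : z + 1 ≤ k
    · -- x, z ∈ D, hence y ∈ D
      exact ((hD y x (by omega) hxy (by omega)).asymm hPxy).elim
    · -- x ∈ D, z ∈ H
      rcases lt_trichotomy x m with hxm | hxm | hxm
      · -- x < m : survive with m
        refine ⟨hOL', ?_, ?_, ?_, m, hmi, hmk, ?_, ?_⟩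
        · intro d d' h1 h2 h3
          exact (swap_pre hnd (by rintro ⟨rfl, rfl⟩; omega)
            (by rintro ⟨rfl, rfl⟩; omega)).mp (hD d d' h1 h2 h3)
        · intro l l' h1 h2 h3
          exact (swap_pre hnd (by rintro ⟨rfl, rfl⟩; omega)
            (by rintro ⟨rfl, rfl⟩; omega)).mp (hLo l l' h1 h2 h3)
        · intro h h' h1 h2 h3
          exact (swap_pre hnd (by rintro ⟨rfl, rfl⟩; omega)
            (by rintro ⟨rfl, rfl⟩; omega)).mp (hH h h' h1 h2 h3)
        · intro l h1 h2
          exact (swap_pre hnd (by rintro ⟨rfl, rfl⟩; omega)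
            (by rintro ⟨rfl, rfl⟩; omega)).mp (hLm l h1 h2)
        · intro h h1 h2
          exact (swap_pre hnd (by rintro ⟨rfl, rfl⟩; omega)
            (by rintro ⟨rfl, rfl⟩; omega)).mp (hmH h h1 h2)
      · subst hxm
        exact ((hmH z (by omega) (by omega)).asymm hPzx).elim
      · exact (((hD x m hmi hxm hxD).trans
          (hmH z (by omega) (by omega))).asymm hPzx).elim
  · exact ((hH x z (by omega) (by omega) (by omega)).asymm hPzx).elim

end Steps

lemma kinv_knuthStep {n k i : ℕ} {w π : List ℕ} (hi : 1 ≤ i) (hik : i < k) (hkn : k ≤ n)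
    (hK : Kinv n k i w) (hs : KnuthStep w π) : Kinv n k i π := by
  obtain ⟨u, v, x, y, z, hxy, hyz, hc⟩ := hs
  rcases hc with ⟨rfl, rfl⟩ | ⟨rfl, rfl⟩ | ⟨rfl, rfl⟩ | ⟨rfl, rfl⟩
  · have e1 : u ++ y :: x :: z :: v = (u ++ [y]) ++ x :: z :: v := by simp
    have e2 : u ++ y :: z :: x :: v = (u ++ [y]) ++ z :: x :: v := by simp
    rw [e1] at hK; rw [e2]
    exact kinv_step1 hi hik hkn hxy hyz hK
  · have e1 : u ++ y :: z :: x :: v = (u ++ [y]) ++ z :: x :: v := by simp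
    have e2 : u ++ y :: x :: z :: v = (u ++ [y]) ++ x :: z :: v := by simp
    rw [e1] at hK; rw [e2]
    exact kinv_step2 hi hik hkn hxy hyz hK
  · exact kinv_step3 hi hik hkn hxy hyz hK
  · exact kinv_step4 hi hik hkn hxy hyz hK

theorem stmt11 (n k i : ℕ) (hi : 1 ≤ i) (hik : i < k) (hkn : k ≤ n)
    (w : List ℕ)
    (hw : KnuthEquiv (descFromTo (k - 1) (i + 1) ++ ascFromTo 1 i ++ ascFromTo k n) w) :
    ¬ Contains3412 w ∧ ¬ Contains4231 w := by
  refine kinv_avoid hi hik hkn ?_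
  induction hw with
  | refl => exact kinv_base hi hik hkn
  | tail hsteps hstep ih => exact kinv_knuthStep hi hik hkn ih hstep
end

section
/- For k ≥ 3, every permutation in S_{2k} that is Knuth equivalent to the permutation (k+1, k+2, ..., 2k, 1, 2, ..., k) contains the pattern 3412. -/
namespace Stmt14Aux


lemma mem_asc {lo hi j : ℕ} : j ∈ ascFromTo lo hi ↔ lo ≤ j ∧ j ≤ hi := by
  simp only [ascFromTo, List.mem_map, List.mem_range]
  constructor
  · rintro ⟨i, hi, rfl⟩; omega
  · rintro ⟨h1, h2⟩; exact ⟨j - lo, by omega, by omega⟩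

lemma asc_len (lo hi : ℕ) : (ascFromTo lo hi).length = hi + 1 - lo := by
  simp [ascFromTo]

lemma asc_pairwise (lo hi : ℕ) : (ascFromTo lo hi).Pairwise (·<·) := by
  rw [ascFromTo, List.pairwise_map]
  exact (List.pairwise_lt_range (n := _)).imp (by omega)

lemma asc_split (lo mid hi : ℕ) (h1 : lo ≤ mid + 1) (h2 : mid ≤ hi) :
    ascFromTo lo hi = ascFromTo lo mid ++ ascFromTo (mid + 1) hi := by
  rw [ascFromTo, show hi + 1 - lo = (mid + 1 - lo) + (hi + 1 - (mid + 1)) by omega,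
    List.range_add, List.map_append, List.map_map]
  congr 1
  exact List.map_congr_left (fun i _ => by simp; omega)

lemma pw_subset_sublist : ∀ (l s : List ℕ), s.Pairwise (·<·) → l.Pairwise (·<·) →
    (∀ x ∈ s, x ∈ l) → s.Sublist l := by
  intro l
  induction l with
  | nil =>
    intro s _ _ hsub
    have : s = [] := List.eq_nil_iff_forall_not_mem.mpr (fun x hx => by simpa using hsub x hx)
    simp [this]
  | cons a l ih =>
    intro s hs hl hsub
    cases s with
    | nil => exact List.nil_sublist _
    | cons b s' =>
      rcases List.pairwise_cons.mp hs with ⟨hb, hs'⟩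
      rcases List.pairwise_cons.mp hl with ⟨ha, hl'⟩
      by_cases hba : b = a
      · subst hba
        refine (ih s' hs' hl' ?_).cons₂ b
        intro x hx
        have hx1 : x ∈ b :: l := hsub x (List.mem_cons_of_mem _ hx)
        have : b < x := hb x hx
        rcases List.mem_cons.mp hx1 with rfl | h
        · omega
        · exact h
      · have hbl : b ∈ l := by
          rcases List.mem_cons.mp (hsub b List.mem_cons_self) with rfl | h
          · exact absurd rfl hba
          · exact h
        have hanotin : a ∉ b :: s' := by
          intro hmem
          rcases List.mem_cons.mp hmem with rfl | hmem'
          · exact hba rfl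
          · have h1 : b < a := hb a hmem'
            have h2 : a < b := ha b hbl
            omega
        refine (ih (b :: s') hs hl' ?_).cons a
        intro x hx
        rcases List.mem_cons.mp (hsub x hx) with rfl | h
        · exact absurd hx hanotin
        · exact h

lemma sublist_triple {a b c : ℕ} {m : List ℕ} (h : m.Sublist [a, b, c]) :
    m = [] ∨ m = [a] ∨ m = [b] ∨ m = [c] ∨ m = [a,b] ∨ m = [a,c] ∨ m = [b,c] ∨ m = [a,b,c] := by
  have h2 := List.mem_sublists.mpr h
  have h3 : [a,b,c].sublists = [[],[a],[b],[a,b],[c],[a,c],[b,c],[a,b,c]] := by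
    simp [List.sublists]
  rw [h3] at h2
  simp only [List.mem_cons, List.not_mem_nil, or_false] at h2
  tauto

lemma assemble {u v win' l1 l2 m m' : List ℕ}
    (h1 : l1.Sublist u) (h2 : m'.Sublist win') (h3 : l2.Sublist v)
    (hp : (l1 ++ (m ++ l2)).Pairwise (·<·))
    (hm' : m'.Pairwise (·<·))
    (hlo : ∀ b ∈ m', ∃ a ∈ m, a ≤ b)
    (hhi : ∀ b ∈ m', ∃ a ∈ m, b ≤ a) :
    (l1 ++ (m' ++ l2)).Sublist (u ++ (win' ++ v)) ∧ (l1 ++ (m' ++ l2)).Pairwise (·<·) := by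
  refine ⟨h1.append (h2.append h3), ?_⟩
  rw [List.pairwise_append] at hp ⊢
  obtain ⟨hp1, hp2, hp3⟩ := hp
  rw [List.pairwise_append] at hp2 ⊢
  obtain ⟨hpm, hpl2, hcross⟩ := hp2
  refine ⟨hp1, ⟨hm', hpl2, ?_⟩, ?_⟩
  · intro b hb c hc
    obtain ⟨a, ha, hab⟩ := hhi b hb
    have := hcross a ha c hc
    omega
  · intro a ha b hb
    rcases List.mem_append.mp hb with hb' | hb'
    · obtain ⟨a', ha', h'⟩ := hlo b hb'
      have := hp3 a ha a' (List.mem_append_left _ ha')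
      omega
    · exact hp3 a ha b (List.mem_append_right _ hb')

lemma lis_transfer {u v winw winp : List ℕ} {k : ℕ}
    (hwin : ∀ m : List ℕ, m.Sublist winp → m.Pairwise (·<·) →
      ∃ m' : List ℕ, m'.Sublist winw ∧ m'.Pairwise (·<·) ∧ m'.length = m.length ∧
        (∀ b ∈ m', ∃ a ∈ m, a ≤ b) ∧ (∀ b ∈ m', ∃ a ∈ m, b ≤ a))
    (hlis : ∀ l : List ℕ, l.Sublist (u ++ (winw ++ v)) → l.Pairwise (·<·) → l.length ≤ k) :
    ∀ l : List ℕ, l.Sublist (u ++ (winp ++ v)) → l.Pairwise (·<·) → l.length ≤ k := by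
  intro l hl hp
  obtain ⟨l1, r, rfl, h1, hr⟩ := List.sublist_append_iff.mp hl
  obtain ⟨m, l2, rfl, hm, h3⟩ := List.sublist_append_iff.mp hr
  have hpm : m.Pairwise (·<·) := ((List.pairwise_append.mp
    (List.pairwise_append.mp hp).2.1).1)
  obtain ⟨m', hm', hpm', hlen, hlo, hhi⟩ := hwin m hm hpm
  obtain ⟨hsub, hpw⟩ := assemble h1 hm' h3 hp hpm' hlo hhi
  have := hlis _ hsub hpw
  simp only [List.length_append] at this ⊢
  omega


def WinOK (winw winp : List ℕ) : Prop :=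
  ∀ m : List ℕ, m.Sublist winp → m.Pairwise (·<·) →
    ∃ m' : List ℕ, m'.Sublist winw ∧ m'.Pairwise (·<·) ∧ m'.length = m.length ∧
      (∀ b ∈ m', ∃ a ∈ m, a ≤ b) ∧ (∀ b ∈ m', ∃ a ∈ m, b ≤ a)

lemma winOK_refl_cases {winw : List ℕ} {m : List ℕ} (h : m.Sublist winw) (hp : m.Pairwise (·<·)) :
    ∃ m' : List ℕ, m'.Sublist winw ∧ m'.Pairwise (·<·) ∧ m'.length = m.length ∧
      (∀ b ∈ m', ∃ a ∈ m, a ≤ b) ∧ (∀ b ∈ m', ∃ a ∈ m, b ≤ a) :=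
  ⟨m, h, hp, rfl, fun b hb => ⟨b, hb, le_rfl⟩, fun b hb => ⟨b, hb, le_rfl⟩⟩

lemma winOK_d1 {x y z : ℕ} (hxy : x < y) (hyz : y < z) : WinOK [y,x,z] [y,z,x] := by
  intro m hm hp
  rcases sublist_triple hm with rfl|rfl|rfl|rfl|rfl|rfl|rfl|rfl
  · exact winOK_refl_cases (List.nil_sublist _) hp
  · exact winOK_refl_cases (List.singleton_sublist.mpr (by simp)) hp
  · exact winOK_refl_cases (List.singleton_sublist.mpr (by simp)) hp
  · exact winOK_refl_cases (List.singleton_sublist.mpr (by simp)) hp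
  · exact winOK_refl_cases (((List.Sublist.refl [z]).cons x).cons₂ y) hp
  · exfalso; simp [List.pairwise_cons] at hp; omega
  · exfalso; simp [List.pairwise_cons] at hp; omega
  · exfalso; simp [List.pairwise_cons] at hp; omega

lemma winOK_d2 {x y z : ℕ} (hxy : x < y) (hyz : y < z) : WinOK [y,z,x] [y,x,z] := by
  intro m hm hp
  rcases sublist_triple hm with rfl|rfl|rfl|rfl|rfl|rfl|rfl|rfl
  · exact winOK_refl_cases (List.nil_sublist _) hp
  · exact winOK_refl_cases (List.singleton_sublist.mpr (by simp)) hp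
  · exact winOK_refl_cases (List.singleton_sublist.mpr (by simp)) hp
  · exact winOK_refl_cases (List.singleton_sublist.mpr (by simp)) hp
  · exfalso; simp [List.pairwise_cons] at hp; omega
  · -- m = [y,z]
    exact winOK_refl_cases (((List.nil_sublist [x]).cons₂ z).cons₂ y) hp
  · -- m = [x,z], use m' = [y,z]
    refine ⟨[y,z], ((List.nil_sublist [x]).cons₂ z).cons₂ y, ?_, rfl, ?_, ?_⟩
    · simp [List.pairwise_cons]; omega
    · exact fun b hb => ⟨x, by simp, by simp at hb; omega⟩
    · exact fun b hb => ⟨z, by simp, by simp at hb; omega⟩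
  · exfalso; simp [List.pairwise_cons] at hp; omega

lemma winOK_d3 {x y z : ℕ} (hxy : x < y) (hyz : y < z) : WinOK [x,z,y] [z,x,y] := by
  intro m hm hp
  rcases sublist_triple hm with rfl|rfl|rfl|rfl|rfl|rfl|rfl|rfl
  · exact winOK_refl_cases (List.nil_sublist _) hp
  · exact winOK_refl_cases (List.singleton_sublist.mpr (by simp)) hp
  · exact winOK_refl_cases (List.singleton_sublist.mpr (by simp)) hp
  · exact winOK_refl_cases (List.singleton_sublist.mpr (by simp)) hp
  · exfalso; simp [List.pairwise_cons] at hp; omega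
  · exfalso; simp [List.pairwise_cons] at hp; omega
  · -- m = [x,y]
    exact winOK_refl_cases (((List.Sublist.refl [y]).cons z).cons₂ x) hp
  · exfalso; simp [List.pairwise_cons] at hp; omega

lemma winOK_d4 {x y z : ℕ} (hxy : x < y) (hyz : y < z) : WinOK [z,x,y] [x,z,y] := by
  intro m hm hp
  rcases sublist_triple hm with rfl|rfl|rfl|rfl|rfl|rfl|rfl|rfl
  · exact winOK_refl_cases (List.nil_sublist _) hp
  · exact winOK_refl_cases (List.singleton_sublist.mpr (by simp)) hp
  · exact winOK_refl_cases (List.singleton_sublist.mpr (by simp)) hp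
  · exact winOK_refl_cases (List.singleton_sublist.mpr (by simp)) hp
  · -- m = [x,z], use m' = [x,y]
    refine ⟨[x,y], (((List.Sublist.refl [y]).cons₂ x).cons z), ?_, rfl, ?_, ?_⟩
    · simp [List.pairwise_cons]; omega
    · exact fun b hb => ⟨x, by simp, by simp at hb; omega⟩
    · exact fun b hb => ⟨z, by simp, by simp at hb; omega⟩
  · -- m = [x,y]
    exact winOK_refl_cases (((List.Sublist.refl [y]).cons₂ x).cons z) hp
  · exfalso; simp [List.pairwise_cons] at hp; omega
  · exfalso; simp [List.pairwise_cons] at hp; omega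

lemma pair_lt {p : ℕ → Bool} {w u v : List ℕ} {a b : ℕ} (hw : w = u ++ a :: b :: v)
    (hp : (w.filter p).Pairwise (·<·)) (ha : p a = true) (hb : p b = true) : a < b := by
  subst hw
  rw [List.filter_append, List.pairwise_append] at hp
  have hfc : (a :: b :: v).filter p = a :: b :: v.filter p := by
    simp [List.filter_cons, ha, hb]
  have h2 := hp.2.1
  rw [hfc] at h2
  exact (List.pairwise_cons.mp h2).1 b (by simp)



def SInv (k : ℕ) (w : List ℕ) : Prop :=
  w.Perm (ascFromTo 1 (2*k)) ∧
  (w.filter (fun a => decide (a ≤ k))).Pairwise (·<·) ∧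
  (w.filter (fun a => decide (k < a))).Pairwise (·<·) ∧
  ∀ l : List ℕ, l.Sublist w → l.Pairwise (·<·) → l.length ≤ k

lemma SInv_step {k : ℕ} {w π : List ℕ} (h : KnuthStep w π) (hw : SInv k w) : SInv k π := by
  obtain ⟨u, v, x, y, z, hxy, hyz, hcase⟩ := h
  obtain ⟨hperm, hlow, hhigh, hlis⟩ := hw
  rcases hcase with ⟨hweq, hpeq⟩ | ⟨hweq, hpeq⟩ | ⟨hweq, hpeq⟩ | ⟨hweq, hpeq⟩
  · -- d1 : w = u ++ y::x::z::v, π = u ++ y::z::x::v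
    have hz : ¬ (z ≤ k) := by
      intro hzk
      have := pair_lt (p := fun a => decide (a ≤ k)) hweq hlow
        (by simp; omega) (by simp; omega)
      omega
    have hx : x ≤ k := by
      by_contra hxk
      have := pair_lt (p := fun a => decide (k < a)) hweq hhigh
        (by simp; omega) (by simp; omega)
      omega
    have hx' : ¬ (k < x) := by omega
    have hz' : k < z := by omega
    have hfl : π.filter (fun a => decide (a ≤ k)) = w.filter (fun a => decide (a ≤ k)) := by
      rw [hweq, hpeq]
      by_cases hy : y ≤ k <;> simp [List.filter_append, List.filter_cons, hx, hz, hy]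
    have hfh : π.filter (fun a => decide (k < a)) = w.filter (fun a => decide (k < a)) := by
      rw [hweq, hpeq]
      by_cases hy : k < y <;> simp [List.filter_append, List.filter_cons, hx', hz', hy]
    refine ⟨?_, by rw [hfl]; exact hlow, by rw [hfh]; exact hhigh, ?_⟩
    · rw [hpeq]
      refine List.Perm.trans ?_ (hweq ▸ hperm)
      exact List.Perm.append_left u ((List.Perm.swap x z v).cons y)
    · have hlis' : ∀ l : List ℕ, l.Sublist (u ++ ([y,x,z] ++ v)) → l.Pairwise (·<·) →
          l.length ≤ k := fun l' hl' hp' => hlis l' (by rw [hweq]; exact hl') hp'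
      intro l hl hp
      exact lis_transfer (winOK_d1 hxy hyz) hlis' l (by rw [hpeq] at hl; exact hl) hp
  · -- d2 : w = u ++ y::z::x::v, π = u ++ y::x::z::v
    have hweq2 : w = (u ++ [y]) ++ z :: x :: v := by rw [hweq]; simp
    have hz : ¬ (z ≤ k) := by
      intro hzk
      have := pair_lt (p := fun a => decide (a ≤ k)) hweq2 hlow
        (by simp; omega) (by simp; omega)
      omega
    have hx : x ≤ k := by
      by_contra hxk
      have := pair_lt (p := fun a => decide (k < a)) hweq2 hhigh
        (by simp; omega) (by simp; omega)
      omega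
    have hx' : ¬ (k < x) := by omega
    have hz' : k < z := by omega
    have hfl : π.filter (fun a => decide (a ≤ k)) = w.filter (fun a => decide (a ≤ k)) := by
      rw [hweq, hpeq]
      by_cases hy : y ≤ k <;> simp [List.filter_append, List.filter_cons, hx, hz, hy]
    have hfh : π.filter (fun a => decide (k < a)) = w.filter (fun a => decide (k < a)) := by
      rw [hweq, hpeq]
      by_cases hy : k < y <;> simp [List.filter_append, List.filter_cons, hx', hz', hy]
    refine ⟨?_, by rw [hfl]; exact hlow, by rw [hfh]; exact hhigh, ?_⟩
    · rw [hpeq]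
      refine List.Perm.trans ?_ (hweq ▸ hperm)
      exact List.Perm.append_left u (((List.Perm.swap x z v).symm).cons y)
    · have hlis' : ∀ l : List ℕ, l.Sublist (u ++ ([y,z,x] ++ v)) → l.Pairwise (·<·) →
          l.length ≤ k := fun l' hl' hp' => hlis l' (by rw [hweq]; exact hl') hp'
      intro l hl hp
      exact lis_transfer (winOK_d2 hxy hyz) hlis' l (by rw [hpeq] at hl; exact hl) hp
  · -- d3 : w = u ++ x::z::y::v, π = u ++ z::x::y::v
    have hweq2 : w = (u ++ [x]) ++ z :: y :: v := by rw [hweq]; simp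
    have hz : ¬ (z ≤ k) := by
      intro hzk
      have := pair_lt (p := fun a => decide (a ≤ k)) hweq2 hlow
        (by simp; omega) (by simp; omega)
      omega
    have hx : x ≤ k := by
      by_contra hxk
      have := pair_lt (p := fun a => decide (k < a)) hweq2 hhigh
        (by simp; omega) (by simp; omega)
      omega
    have hx' : ¬ (k < x) := by omega
    have hz' : k < z := by omega
    have hfl : π.filter (fun a => decide (a ≤ k)) = w.filter (fun a => decide (a ≤ k)) := by
      rw [hweq, hpeq]
      by_cases hy : y ≤ k <;> simp [List.filter_append, List.filter_cons, hx, hz, hy]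
    have hfh : π.filter (fun a => decide (k < a)) = w.filter (fun a => decide (k < a)) := by
      rw [hweq, hpeq]
      by_cases hy : k < y <;> simp [List.filter_append, List.filter_cons, hx', hz', hy]
    refine ⟨?_, by rw [hfl]; exact hlow, by rw [hfh]; exact hhigh, ?_⟩
    · rw [hpeq]
      refine List.Perm.trans ?_ (hweq ▸ hperm)
      exact List.Perm.append_left u (List.Perm.swap x z (y :: v))
    · have hlis' : ∀ l : List ℕ, l.Sublist (u ++ ([x,z,y] ++ v)) → l.Pairwise (·<·) →
          l.length ≤ k := fun l' hl' hp' => hlis l' (by rw [hweq]; exact hl') hp'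
      intro l hl hp
      exact lis_transfer (winOK_d3 hxy hyz) hlis' l (by rw [hpeq] at hl; exact hl) hp
  · -- d4 : w = u ++ z::x::y::v, π = u ++ x::z::y::v
    have hz : ¬ (z ≤ k) := by
      intro hzk
      have := pair_lt (p := fun a => decide (a ≤ k)) hweq hlow
        (by simp; omega) (by simp; omega)
      omega
    have hx : x ≤ k := by
      by_contra hxk
      have := pair_lt (p := fun a => decide (k < a)) hweq hhigh
        (by simp; omega) (by simp; omega)
      omega
    have hx' : ¬ (k < x) := by omega
    have hz' : k < z := by omega
    have hfl : π.filter (fun a => decide (a ≤ k)) = w.filter (fun a => decide (a ≤ k)) := by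
      rw [hweq, hpeq]
      by_cases hy : y ≤ k <;> simp [List.filter_append, List.filter_cons, hx, hz, hy]
    have hfh : π.filter (fun a => decide (k < a)) = w.filter (fun a => decide (k < a)) := by
      rw [hweq, hpeq]
      by_cases hy : k < y <;> simp [List.filter_append, List.filter_cons, hx', hz', hy]
    refine ⟨?_, by rw [hfl]; exact hlow, by rw [hfh]; exact hhigh, ?_⟩
    · rw [hpeq]
      refine List.Perm.trans ?_ (hweq ▸ hperm)
      exact List.Perm.append_left u ((List.Perm.swap x z (y :: v)).symm)
    · have hlis' : ∀ l : List ℕ, l.Sublist (u ++ ([z,x,y] ++ v)) → l.Pairwise (·<·) →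
          l.length ≤ k := fun l' hl' hp' => hlis l' (by rw [hweq]; exact hl') hp'
      intro l hl hp
      exact lis_transfer (winOK_d4 hxy hyz) hlis' l (by rw [hpeq] at hl; exact hl) hp

lemma SInv_base {k : ℕ} (hk : 3 ≤ k) :
    SInv k (ascFromTo (k + 1) (2 * k) ++ ascFromTo 1 k) := by
  have hsplit : ascFromTo 1 (2*k) = ascFromTo 1 k ++ ascFromTo (k+1) (2*k) :=
    asc_split 1 k (2*k) (by omega) (by omega)
  refine ⟨?_, ?_, ?_, ?_⟩
  · rw [hsplit]; exact List.perm_append_comm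
  · have h1 : (ascFromTo (k+1) (2*k)).filter (fun a => decide (a ≤ k)) = [] :=
      List.filter_eq_nil_iff.mpr (fun a ha => by have := mem_asc.mp ha; simp; omega)
    have h2 : (ascFromTo 1 k).filter (fun a => decide (a ≤ k)) = ascFromTo 1 k :=
      List.filter_eq_self.mpr (fun a ha => by have := mem_asc.mp ha; simp; omega)
    rw [List.filter_append, h1, h2, List.nil_append]
    exact asc_pairwise 1 k
  · have h1 : (ascFromTo (k+1) (2*k)).filter (fun a => decide (k < a)) = ascFromTo (k+1) (2*k) :=
      List.filter_eq_self.mpr (fun a ha => by have := mem_asc.mp ha; simp; omega)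
    have h2 : (ascFromTo 1 k).filter (fun a => decide (k < a)) = [] :=
      List.filter_eq_nil_iff.mpr (fun a ha => by have := mem_asc.mp ha; simp; omega)
    rw [List.filter_append, h1, h2, List.append_nil]
    exact asc_pairwise _ _
  · intro l hl hp
    obtain ⟨l1, l2, rfl, h1, h2⟩ := List.sublist_append_iff.mp hl
    by_cases e1 : l1 = []
    · subst e1
      have := h2.length_le
      rw [asc_len] at this
      simpa using (by omega : l2.length ≤ k)
    · by_cases e2 : l2 = []
      · subst e2
        have := h1.length_le
        rw [asc_len] at this
        simpa using (by omega : l1.length ≤ k)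
      · exfalso
        obtain ⟨a, ha⟩ := List.exists_mem_of_ne_nil l1 e1
        obtain ⟨b, hb⟩ := List.exists_mem_of_ne_nil l2 e2
        have hab : a < b := (List.pairwise_append.mp hp).2.2 a ha b hb
        have ha' := mem_asc.mp (h1.subset ha)
        have hb' := mem_asc.mp (h2.subset hb)
        omega

lemma endgame {k : ℕ} {w : List ℕ} (hk : 3 ≤ k) (hinv : SInv k w) : Contains3412 w := by
  obtain ⟨hperm, hlow, hhigh, hlis⟩ := hinv
  have hnodup : w.Nodup :=
    hperm.nodup_iff.mpr ((asc_pairwise 1 (2*k)).imp (fun h => Nat.ne_of_lt h))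
  have hmem : ∀ j, 1 ≤ j → j ≤ 2*k → j ∈ w := fun j h1 h2 =>
    hperm.mem_iff.mpr (mem_asc.mpr ⟨h1, h2⟩)
  obtain ⟨w1, w2, hsplit⟩ := List.append_of_mem (hmem (k-1) (by omega) (by omega))
  have hk1 : k - 1 ≤ k := by omega
  have hk2 : ¬ (k < k - 1) := by omega
  have hfl : w.filter (fun a => decide (a ≤ k)) =
      w1.filter (fun a => decide (a ≤ k)) ++ (k-1) :: w2.filter (fun a => decide (a ≤ k)) := by
    rw [hsplit]; simp [List.filter_append, List.filter_cons, hk1]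
  have hfh : w.filter (fun a => decide (k < a)) =
      w1.filter (fun a => decide (k < a)) ++ w2.filter (fun a => decide (k < a)) := by
    rw [hsplit]; simp [List.filter_append, List.filter_cons, hk2]
  have hlow' := hfl ▸ hlow
  have hhigh' := hfh ▸ hhigh
  -- low values ≤ k-1 are in w1 or equal k-1
  have hlowmem : ∀ j, 1 ≤ j → j ≤ k - 1 → j ∈ w1 ∨ j = k - 1 := by
    intro j h1 h2
    have hjw := hmem j h1 (by omega)
    rw [hsplit] at hjw
    rcases List.mem_append.mp hjw with h | h
    · exact Or.inl h
    · rcases List.mem_cons.mp h with h' | h'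
      · exact Or.inr h'
      · exfalso
        have hjf : j ∈ w2.filter (fun a => decide (a ≤ k)) :=
          List.mem_filter.mpr ⟨h', by simp; omega⟩
        have := (List.pairwise_append.mp hlow').2.1
        have := (List.pairwise_cons.mp this).1 j hjf
        omega
  -- k+2 ∈ w1
  have hk2w1 : k + 2 ∈ w1 := by
    by_contra hc
    have hk2w2 : k + 2 ∈ w2 := by
      have hjw := hmem (k+2) (by omega) (by omega)
      rw [hsplit] at hjw
      rcases List.mem_append.mp hjw with h | h
      · exact absurd h hc
      · rcases List.mem_cons.mp h with h' | h'
        · omega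
        · exact h'
    -- every j with k+2 ≤ j ≤ 2k lies in w2
    have hhighw2 : ∀ j, k + 2 ≤ j → j ≤ 2*k → j ∈ w2 := by
      intro j h1 h2
      have hjw := hmem j (by omega) h2
      rw [hsplit] at hjw
      rcases List.mem_append.mp hjw with h | h
      · exfalso
        have hjf : j ∈ w1.filter (fun a => decide (k < a)) :=
          List.mem_filter.mpr ⟨h, by simp; omega⟩
        have hkf : k + 2 ∈ w2.filter (fun a => decide (k < a)) :=
          List.mem_filter.mpr ⟨hk2w2, by simp⟩
        have := (List.pairwise_append.mp hhigh').2.2 j hjf (k+2) hkf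
        omega
      · rcases List.mem_cons.mp h with h' | h'
        · omega
        · exact h'
    -- build a long increasing subsequence
    have hsub1 : (ascFromTo 1 (k-1)).Sublist (w1 ++ [k-1]) := by
      have hpw : (w1.filter (fun a => decide (a ≤ k)) ++ [k-1]).Pairwise (·<·) := by
        refine List.Pairwise.sublist ?_ hlow'
        exact (List.Sublist.refl _).append (((List.nil_sublist _).cons₂ (k-1)))
      have hsubset : ∀ j ∈ ascFromTo 1 (k-1), j ∈ w1.filter (fun a => decide (a ≤ k)) ++ [k-1] := by
        intro j hj
        have hj' := mem_asc.mp hj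
        rcases hlowmem j hj'.1 hj'.2 with h | h
        · exact List.mem_append_left _ (List.mem_filter.mpr ⟨h, by simp; omega⟩)
        · exact List.mem_append_right _ (by simp [h])
      refine (pw_subset_sublist _ _ (asc_pairwise _ _) hpw hsubset).trans ?_
      exact (List.filter_sublist (l := w1)).append (List.Sublist.refl _)
    have hsub2 : (ascFromTo (k+2) (2*k)).Sublist w2 := by
      have hpw : (w2.filter (fun a => decide (k < a))).Pairwise (·<·) :=
        List.Pairwise.sublist (List.sublist_append_right _ _) hhigh'
      have hsubset : ∀ j ∈ ascFromTo (k+2) (2*k), j ∈ w2.filter (fun a => decide (k < a)) := by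
        intro j hj
        have hj' := mem_asc.mp hj
        exact List.mem_filter.mpr ⟨hhighw2 j hj'.1 hj'.2, by simp; omega⟩
      exact (pw_subset_sublist _ _ (asc_pairwise _ _) hpw hsubset).trans (List.filter_sublist (l := w2))
    have hsubl : (ascFromTo 1 (k-1) ++ ascFromTo (k+2) (2*k)).Sublist w := by
      rw [hsplit, show w1 ++ (k-1) :: w2 = (w1 ++ [k-1]) ++ w2 by simp]
      exact hsub1.append hsub2
    have hpwl : (ascFromTo 1 (k-1) ++ ascFromTo (k+2) (2*k)).Pairwise (·<·) := by
      rw [List.pairwise_append]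
      refine ⟨asc_pairwise _ _, asc_pairwise _ _, ?_⟩
      intro a ha b hb
      have := mem_asc.mp ha
      have := mem_asc.mp hb
      omega
    have := hlis _ hsubl hpwl
    rw [List.length_append, asc_len, asc_len] at this
    omega
  -- k+1 ∈ w1
  have hk1w1 : k + 1 ∈ w1 := by
    have hjw := hmem (k+1) (by omega) (by omega)
    rw [hsplit] at hjw
    rcases List.mem_append.mp hjw with h | h
    · exact h
    · rcases List.mem_cons.mp h with h' | h'
      · omega
      · exfalso
        have hjf : k + 1 ∈ w2.filter (fun a => decide (k < a)) :=
          List.mem_filter.mpr ⟨h', by simp⟩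
        have hkf : k + 2 ∈ w1.filter (fun a => decide (k < a)) :=
          List.mem_filter.mpr ⟨hk2w1, by simp⟩
        have := (List.pairwise_append.mp hhigh').2.2 (k+2) hkf (k+1) hjf
        omega
  -- k ∈ w2
  have hkw2 : k ∈ w2 := by
    have hjw := hmem k (by omega) (by omega)
    rw [hsplit] at hjw
    rcases List.mem_append.mp hjw with h | h
    · exfalso
      have hjf : k ∈ w1.filter (fun a => decide (a ≤ k)) :=
        List.mem_filter.mpr ⟨h, by simp⟩
      have := (List.pairwise_append.mp hlow').2.2 k hjf (k-1) (by simp)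
      omega
    · rcases List.mem_cons.mp h with h' | h'
      · omega
      · exact h'
  -- [k+1, k+2] <+ w1
  have hsub3 : ([k+1, k+2] : List ℕ).Sublist w1 := by
    have hpw : (w1.filter (fun a => decide (k < a))).Pairwise (·<·) :=
      List.Pairwise.sublist (List.sublist_append_left _ _) hhigh'
    have hsubset : ∀ j ∈ ([k+1, k+2] : List ℕ), j ∈ w1.filter (fun a => decide (k < a)) := by
      intro j hj
      simp only [List.mem_cons, List.not_mem_nil, or_false] at hj
      rcases hj with rfl | rfl
      · exact List.mem_filter.mpr ⟨hk1w1, by simp⟩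
      · exact List.mem_filter.mpr ⟨hk2w1, by simp⟩
    refine (pw_subset_sublist _ _ ?_ hpw hsubset).trans (List.filter_sublist (l := w1))
    simp [List.pairwise_cons]
  have hfinal : ([k+1, k+2, k-1, k] : List ℕ).Sublist w := by
    rw [hsplit]
    have : ([k+1, k+2] ++ (k-1) :: [k] : List ℕ).Sublist (w1 ++ (k-1) :: w2) :=
      hsub3.append ((List.singleton_sublist.mpr hkw2).cons₂ (k-1))
    simpa using this
  exact ⟨k+1, k+2, k-1, k, by omega, by omega, by omega, hfinal⟩

end Stmt14Aux

theorem stmt14 (k : ℕ) (hk : 3 ≤ k) (w : List ℕ)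
    (hw : KnuthEquiv (ascFromTo (k + 1) (2 * k) ++ ascFromTo 1 k) w) :
    Contains3412 w := by
  have hinv : Stmt14Aux.SInv k w := by
    induction hw with
    | refl => exact Stmt14Aux.SInv_base hk
    | tail _ hstep ih => exact Stmt14Aux.SInv_step hstep ih
  exact Stmt14Aux.endgame hk hinv
end

section
/- Let w be a permutation Knuth equivalent to the column word of a two-column standard Young tableau in which the entries k, k+1, k+2, k+3 occupy consecutive rows with k, k+2 in the first column and k+1, k+3 in the second column, and k-2, k-1 occupy the row above with k-2 in the first column. Then w contains the subsequence (k+2, k, k+1, k-1) in this order, and in particular contains the pattern 4231. -/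
/-- Filtering by an "interval-closed" predicate sends an elementary Knuth relation to
an elementary Knuth relation or leaves the filtered word unchanged. -/
lemma filter_knuthStep {p : ℕ → Bool}
    (hp : ∀ ⦃x y z : ℕ⦄, x < y → y < z → p x = true → p z = true → p y = true)
    {w π : List ℕ} (h : KnuthStep w π) :
    w.filter p = π.filter p ∨ KnuthStep (w.filter p) (π.filter p) := by
  obtain ⟨u, v, x, y, z, hxy, hyz, hc⟩ := h
  rcases hc with ⟨rfl, rfl⟩ | ⟨rfl, rfl⟩ | ⟨rfl, rfl⟩ | ⟨rfl, rfl⟩ <;>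
  rcases hpx : p x <;> rcases hpy : p y <;> rcases hpz : p z <;>
    simp only [List.filter_append, List.filter_cons, hpx, hpy, hpz,
      Bool.false_eq_true, if_true, if_false] <;>
    first
    | (left; first | rfl | trivial)
    | (exact absurd (hpy.symm.trans (hp hxy hyz hpx hpz)) Bool.false_ne_true)
    | (right; refine ⟨u.filter p, v.filter p, x, y, z, hxy, hyz, ?_⟩; tauto)

lemma filter_knuthEquiv {p : ℕ → Bool}
    (hp : ∀ ⦃x y z : ℕ⦄, x < y → y < z → p x = true → p z = true → p y = true)
    {w π : List ℕ} (h : KnuthEquiv w π) :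
    KnuthEquiv (w.filter p) (π.filter p) := by
  induction h with
  | refl => exact Relation.ReflTransGen.refl
  | tail _ hstep ih =>
      rcases filter_knuthStep hp hstep with he | hs
      · rwa [← he]
      · exact ih.tail hs

/-- The Knuth class of the word `[k+2, k, k-2, k+3, k+1, k-1]`. -/
def InClass (k : ℕ) (w : List ℕ) : Prop :=
  w = [k+2, k, k-2, k+3, k+1, k-1] ∨
  w = [k+2, k, k+3, k-2, k+1, k-1] ∨
  w = [k+2, k, k+3, k+1, k-2, k-1] ∨
  w = [k+2, k+3, k, k-2, k+1, k-1] ∨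
  w = [k+2, k+3, k, k+1, k-2, k-1]

set_option maxHeartbeats 1000000 in
lemma class_step {k : ℕ} (hk : 3 ≤ k) {w π : List ℕ}
    (hw : InClass k w) (h : KnuthStep w π) : InClass k π := by
  obtain ⟨u, v, x, y, z, hxy, hyz, hc⟩ := h
  rcases hc with ⟨h1, rfl⟩ | ⟨h1, rfl⟩ | ⟨h1, rfl⟩ | ⟨h1, rfl⟩ <;>
  rcases hw with hw | hw | hw | hw | hw <;> rw [hw] at h1 <;>
  · have hu : u.length ≤ 3 := by
      have := congrArg List.length h1
      simp only [List.length_append, List.length_cons, List.length_nil] at this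
      omega
    rcases u with _ | ⟨a, _ | ⟨b, _ | ⟨c, _ | ⟨d, u⟩⟩⟩⟩ <;>
      simp only [List.length_cons, List.length_nil] at hu <;>
      try omega
    all_goals (
      simp only [List.cons_append, List.nil_append, List.cons.injEq] at h1
      first
      | (obtain ⟨rfl, rfl, rfl, rfl⟩ := h1)
      | (obtain ⟨rfl, rfl, rfl, rfl, rfl⟩ := h1)
      | (obtain ⟨rfl, rfl, rfl, rfl, rfl, rfl⟩ := h1)
      | (obtain ⟨rfl, rfl, rfl, rfl, rfl, rfl, rfl⟩ := h1))
    all_goals (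
      simp only [InClass, List.cons_append, List.nil_append, List.cons.injEq,
        List.cons_ne_nil, and_true, and_false, or_false, false_or]
      first | omega | tauto)

lemma class_knuthEquiv {k : ℕ} (hk : 3 ≤ k) {w π : List ℕ}
    (h : KnuthEquiv w π) (hw : InClass k w) : InClass k π := by
  induction h with
  | refl => exact hw
  | tail _ hstep ih => exact class_step hk ih hstep

/-- Filter of a sorted list around three known consecutive entries. -/
lemma filter_sorted_three {l : List ℕ} (hs : l.Pairwise (· < ·)) {i : ℕ} {a b c : ℕ}
    {p : ℕ → Bool}
    (ha : l[i]? = some a) (hb : l[i+1]? = some b) (hc : l[i+2]? = some c)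
    (hpa : p a = true) (hpb : p b = true) (hpc : p c = true)
    (hlow : ∀ t, t < a → t ∈ l → p t = false)
    (hhigh : ∀ t, c < t → t ∈ l → p t = false) :
    l.filter p = [a, b, c] := by
  obtain ⟨hia, ea⟩ := List.getElem?_eq_some_iff.mp ha
  obtain ⟨hib, eb⟩ := List.getElem?_eq_some_iff.mp hb
  obtain ⟨hic, ec⟩ := List.getElem?_eq_some_iff.mp hc
  have hd : l = l.take i ++ a :: b :: c :: l.drop (i+3) := by
    conv_lhs => rw [← List.take_append_drop i l]
    congr 1
    rw [List.drop_eq_getElem_cons hia, List.drop_eq_getElem_cons hib,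
      List.drop_eq_getElem_cons hic, ea, eb, ec]
  have hs' := hd ▸ hs
  obtain ⟨_, hrest, hcross⟩ := List.pairwise_append.mp hs'
  have h1 : (l.take i).filter p = [] := by
    refine List.filter_eq_nil_iff.mpr fun t ht => ?_
    have htl : t ∈ l := (List.take_sublist i l).subset ht
    have : t < a := hcross t ht a (by simp)
    simp [hlow t this htl]
  have h2 : (l.drop (i+3)).filter p = [] := by
    refine List.filter_eq_nil_iff.mpr fun t ht => ?_
    have htl : t ∈ l := List.mem_of_mem_drop ht
    have : c < t := by
      have := (List.pairwise_cons.mp ((List.pairwise_cons.mp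
        ((List.pairwise_cons.mp hrest).2)).2)).1
      exact this t ht
    simp [hhigh t this htl]
  conv_lhs => rw [hd]
  rw [List.filter_append, h1, List.filter_cons, List.filter_cons, List.filter_cons,
    hpa, hpb, hpc, h2]
  rfl

theorem stmt16 (c1 c2 : List ℕ) (k i : ℕ) (hk : 3 ≤ k)
    (hc1 : c1.Chain' (· < ·)) (hc2 : c2.Chain' (· < ·))
    (hlen : c2.length ≤ c1.length)
    (hrow : ∀ j (hj : j < c2.length),
      c1[j]'(Nat.lt_of_lt_of_le hj hlen) < c2[j]'hj)
    (hstd : IsOneLine (c1.length + c2.length) (c1 ++ c2))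
    (h1 : c1[i]? = some (k - 2)) (h2 : c2[i]? = some (k - 1))
    (h3 : c1[i + 1]? = some k) (h4 : c2[i + 1]? = some (k + 1))
    (h5 : c1[i + 2]? = some (k + 2)) (h6 : c2[i + 2]? = some (k + 3))
    (w : List ℕ) (hw : KnuthEquiv (c1.reverse ++ c2.reverse) w) :
    [k + 2, k, k + 1, k - 1].Sublist w ∧ Contains4231 w := by
  set p : ℕ → Bool := fun t => decide (k - 2 ≤ t ∧ t ≤ k + 3) with hp
  have hpint : ∀ ⦃x y z : ℕ⦄, x < y → y < z → p x = true → p z = true → p y = true := by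
    intro x y z hxy hyz hx hz
    simp only [hp, decide_eq_true_eq] at *
    omega
  -- nodup facts
  have hnd : (c1 ++ c2).Nodup := by
    refine hstd.symm.nodup ?_
    exact List.Nodup.map (fun a b h => by omega) List.nodup_range
  obtain ⟨-, -, hdisj⟩ := List.nodup_append'.mp hnd
  have hm2 : k - 2 ∈ c1 := by
    obtain ⟨h, e⟩ := List.getElem?_eq_some_iff.mp h1; exact e ▸ List.getElem_mem h
  have hm3 : k + 3 ∈ c2 := by
    obtain ⟨h, e⟩ := List.getElem?_eq_some_iff.mp h6; exact e ▸ List.getElem_mem h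
  -- filters of the two columns
  have f1 : c1.filter p = [k - 2, k, k + 2] := by
    refine filter_sorted_three (List.isChain_iff_pairwise.mp hc1) h1 h3 h5 ?_ ?_ ?_ ?_ ?_
    · simp only [hp, decide_eq_true_eq, decide_eq_false_iff_not]; omega
    · simp only [hp, decide_eq_true_eq, decide_eq_false_iff_not]; omega
    · simp only [hp, decide_eq_true_eq, decide_eq_false_iff_not]; omega
    · intro t ht _; simp only [hp, decide_eq_true_eq, decide_eq_false_iff_not]; omega
    · intro t ht htl
      have : t ≠ k + 3 := fun h => (hdisj (h ▸ htl)) hm3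
      simp only [hp, decide_eq_true_eq, decide_eq_false_iff_not]; omega
  have f2 : c2.filter p = [k - 1, k + 1, k + 3] := by
    refine filter_sorted_three (List.isChain_iff_pairwise.mp hc2) h2 h4 h6 ?_ ?_ ?_ ?_ ?_
    · simp only [hp, decide_eq_true_eq, decide_eq_false_iff_not]; omega
    · simp only [hp, decide_eq_true_eq, decide_eq_false_iff_not]; omega
    · simp only [hp, decide_eq_true_eq, decide_eq_false_iff_not]; omega
    · intro t ht htl
      have : t ≠ k - 2 := fun h => (hdisj hm2) (h ▸ htl)
      simp only [hp, decide_eq_true_eq, decide_eq_false_iff_not]; omega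
    · intro t ht _; simp only [hp, decide_eq_true_eq, decide_eq_false_iff_not]; omega
  have fstart : (c1.reverse ++ c2.reverse).filter p = [k+2, k, k-2, k+3, k+1, k-1] := by
    rw [List.filter_append, List.filter_reverse, List.filter_reverse, f1, f2]
    rfl
  -- propagate the class along the Knuth equivalence
  have hcl : InClass k (w.filter p) := by
    refine class_knuthEquiv hk (filter_knuthEquiv hpint hw) ?_
    rw [fstart]
    exact Or.inl rfl
  -- each class member contains the required subsequence
  have hsubf : [k + 2, k, k + 1, k - 1].Sublist (w.filter p) := by
    rcases hcl with hc | hc | hc | hc | hc <;> rw [hc] <;>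
      repeat first
      | exact List.nil_sublist _
      | rw [List.cons_sublist_cons]
      | apply List.sublist_cons_of_sublist
  have hsub : [k + 2, k, k + 1, k - 1].Sublist w := hsubf.trans List.filter_sublist
  exact ⟨hsub, k + 2, k, k + 1, k - 1, by omega, by omega, by omega, hsub⟩
end
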